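/- Let G be a graph and I an independent set in G with |I| = 3. If there exists a connected component C of G − I such that every vertex of I has a neighbor in C, then G[N[C]] contains an induced subgraph H belonging to the class S ∪ T ∪ M whose set of extremities is exactly I. -/

import Mathlib

open SimpleGraph

/-- The `k`-subdivided claw `S_k`: a center vertex (`none`) with three pendant
paths of length `k` attached. Vertex `some (i, j)` is the `(j+1)`-st vertex on arm `i`. -/
def subClaw (k : ℕ) : SimpleGraph (Option (Fin 3 × Fin k)) :=
  SimpleGraph.fromRel fun a b =>
    match a, b with
    | none, some p => (p.2 : ℕ) = 0
    | some p, some q => p.1 = q.1 ∧ (q.2 : ℕ) = (p.2 : ℕ) + 1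
    | _, _ => False

/-- The `k`-subdivided net `T_k`: a triangle on the vertices `(i, 0)` with a pendant
path of length `k` attached to each triangle vertex. -/
def subNet (k : ℕ) : SimpleGraph (Fin 3 × Fin (k + 1)) :=
  SimpleGraph.fromRel fun a b =>
    ((a.2 : ℕ) = 0 ∧ (b.2 : ℕ) = 0 ∧ a.1 ≠ b.1) ∨ (a.1 = b.1 ∧ (b.2 : ℕ) = (a.2 : ℕ) + 1)

/-- `3P_k`: the disjoint union of three paths on `k` vertices. -/
def threePath (k : ℕ) : SimpleGraph (Fin 3 × Fin k) :=
  SimpleGraph.fromRel fun a b => a.1 = b.1 ∧ (b.2 : ℕ) = (a.2 : ℕ) + 1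

/-- Disjoint union of two simple graphs. -/
def disjSum {α β : Type*} (G : SimpleGraph α) (H : SimpleGraph β) : SimpleGraph (α ⊕ β) :=
  SimpleGraph.fromRel fun a b =>
    match a, b with
    | Sum.inl x, Sum.inl y => G.Adj x y
    | Sum.inr x, Sum.inr y => H.Adj x y
    | _, _ => False

/-- `H` is (isomorphic to) an induced subgraph of `G`. -/
def IsInducedSubgraph {α β : Type*} (H : SimpleGraph α) (G : SimpleGraph β) : Prop :=
  Nonempty (H ↪g G)

/-- `G` is `{S_k, T_k}`-free. -/
def SkTkFree {V : Type*} (k : ℕ) (G : SimpleGraph V) : Prop :=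
  ¬ IsInducedSubgraph (subClaw k) G ∧ ¬ IsInducedSubgraph (subNet k) G

/-- `G` has a path of eccentricity at most `k`. -/
def HasPathEccLE {V : Type*} (G : SimpleGraph V) (k : ℕ) : Prop :=
  ∃ (u v : V) (p : G.Walk u v), p.IsPath ∧ ∀ x : V, ∃ y ∈ p.support, G.dist x y ≤ k

/-- A graph in the class `𝓢` (subdivisions of `K_{1,3}`): a center vertex `none` with
three pendant paths, arm `i` having length `n i` (required to be `≥ 1`). -/
def spiderS (n : Fin 3 → ℕ) : SimpleGraph (Option (Σ i : Fin 3, Fin (n i))) :=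
  SimpleGraph.fromRel fun a b =>
    match a, b with
    | none, some p => (p.2 : ℕ) = 0
    | some p, some q => p.1 = q.1 ∧ (q.2 : ℕ) = (p.2 : ℕ) + 1
    | _, _ => False

/-- A graph in the class `𝓣`: a triangle on the vertices `⟨i, 0⟩` with a pendant
path of length `n i` (required to be `≥ 1`) attached to each triangle vertex. -/
def spiderT (n : Fin 3 → ℕ) : SimpleGraph (Σ i : Fin 3, Fin (n i + 1)) :=
  SimpleGraph.fromRel fun a b =>
    ((a.2 : ℕ) = 0 ∧ (b.2 : ℕ) = 0 ∧ a.1 ≠ b.1) ∨ (a.1 = b.1 ∧ (b.2 : ℕ) = (a.2 : ℕ) + 1)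

/-- A graph in the class `𝓜`: a path on `m` vertices `some 0, …, some (m-1)` together
with a center `none` adjacent exactly to the vertices of `A` (required to avoid the
endpoints of the path and to have at least two elements). -/
def centerPath (m : ℕ) (A : Finset (Fin m)) : SimpleGraph (Option (Fin m)) :=
  SimpleGraph.fromRel fun a b =>
    match a, b with
    | none, some j => j ∈ A
    | some j, some j' => (j' : ℕ) = (j : ℕ) + 1
    | _, _ => False

def cat {V : Type} (f : ℕ → V) (c : ℕ) (g : ℕ → V) : ℕ → V :=
  fun m => if m < c then f m else g (m - c)

lemma cat_lt {V : Type} (f : ℕ → V) (c : ℕ) (g : ℕ → V) {m : ℕ} (h : m < c) :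
    cat f c g m = f m := if_pos h

lemma cat_ge {V : Type} (f : ℕ → V) (c : ℕ) (g : ℕ → V) {m : ℕ} (h : c ≤ m) :
    cat f c g m = g (m - c) := if_neg (by omega)

lemma cat_chain {V : Type} (G : SimpleGraph V) (f g : ℕ → V) (c1 c2 : ℕ) (hc1 : 0 < c1)
    (h1 : ∀ i, i + 1 < c1 → G.Adj (f i) (f (i + 1)))
    (h2 : ∀ i, i + 1 < c2 → G.Adj (g i) (g (i + 1)))
    (hseam : 0 < c2 → G.Adj (f (c1 - 1)) (g 0)) :
    ∀ i, i + 1 < c1 + c2 → G.Adj (cat f c1 g i) (cat f c1 g (i + 1)) := by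
  intro i hi
  rcases lt_trichotomy (i + 1) c1 with h | h | h
  · rw [cat_lt _ _ _ (by omega), cat_lt _ _ _ h]
    exact h1 i h
  · rw [cat_lt _ _ _ (by omega), cat_ge _ _ _ (by omega)]
    have : i + 1 - c1 = 0 := by omega
    rw [this]
    have : i = c1 - 1 := by omega
    rw [this]
    exact hseam (by omega)
  · rw [cat_ge _ _ _ (by omega), cat_ge _ _ _ (by omega)]
    have h2' := h2 (i - c1) (by omega)
    have e1 : i + 1 - c1 = i - c1 + 1 := by omega
    rw [e1]
    exact h2'

lemma cat_mem {V : Type} (f g : ℕ → V) (c1 c2 : ℕ) (pr : V → Prop)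
    (h1 : ∀ i, i < c1 → pr (f i)) (h2 : ∀ i, i < c2 → pr (g i)) :
    ∀ i, i < c1 + c2 → pr (cat f c1 g i) := by
  intro i hi
  by_cases h : i < c1
  · rw [cat_lt _ _ _ h]; exact h1 i h
  · rw [cat_ge _ _ _ (by omega)]; exact h2 _ (by omega)

lemma walk_fun {V : Type} (G : SimpleGraph V) (s : Set V) (h : (G.induce s).Connected)
    (x y : V) (hx : x ∈ s) (hy : y ∈ s) :
    ∃ (r : ℕ) (v : ℕ → V), v 0 = x ∧ v r = y ∧ (∀ i, i ≤ r → v i ∈ s) ∧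
      (∀ i, i < r → G.Adj (v i) (v (i + 1))) := by
  obtain ⟨W⟩ := h.preconnected ⟨x, hx⟩ ⟨y, hy⟩
  refine ⟨W.length, fun i => (W.getVert i).1, ?_, ?_, ?_, ?_⟩
  · exact congrArg Subtype.val W.getVert_zero
  · exact congrArg Subtype.val W.getVert_length
  · intro i _; exact (W.getVert i).2
  · intro i hi
    exact W.adj_getVert_succ hi

def Pcand {V : Type} (G : SimpleGraph V) (s : Set V) (a b : V) (f : ℕ → V) (k : ℕ) : Prop :=
  0 < k ∧ (∀ i, i < k → f i ∈ s) ∧ (∀ i, i + 1 < k → G.Adj (f i) (f (i + 1))) ∧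
    G.Adj a (f 0) ∧ G.Adj b (f (k - 1))

lemma Pcand_rev {V : Type} {G : SimpleGraph V} {s : Set V} {a b : V} {f : ℕ → V} {k : ℕ}
    (hf : Pcand G s a b f k) : Pcand G s b a (fun i => f (k - 1 - i)) k := by
  obtain ⟨hk, hs, hc, ha, hb⟩ := hf
  refine ⟨hk, fun i hi => hs _ (by omega), ?_, ?_, ?_⟩
  · intro i hi
    have h3 := hc (k - 2 - i) (by omega)
    have e1 : k - 1 - i = k - 2 - i + 1 := by omega
    have e2 : k - 1 - (i + 1) = k - 2 - i := by omega
    show G.Adj (f (k - 1 - i)) (f (k - 1 - (i + 1)))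
    rw [e1, e2]
    exact h3.symm
  · simpa using hb
  · show G.Adj a (f (k - 1 - (k - 1)))
    have e : k - 1 - (k - 1) = 0 := by omega
    rw [e]
    exact ha

section Pmin

variable {V : Type} {G : SimpleGraph V} {s : Set V} {a b : V} {f : ℕ → V} {k : ℕ}
  (hf : Pcand G s a b f k) (hmin : ∀ k' f', k' < k → ¬ Pcand G s a b f' k')

include hf hmin

lemma P_L1 : ∀ i j, i + 2 ≤ j → j < k → ¬ G.Adj (f i) (f j) := by
  intro i j hij hj hadj
  obtain ⟨hk, hs, hc, ha, hb⟩ := hf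
  refine hmin (i + 1 + (k - j)) (cat f (i + 1) (fun m => f (j + m))) (by omega) ?_
  refine ⟨by omega, ?_, ?_, ?_, ?_⟩
  · exact cat_mem f _ (i + 1) (k - j) _ (fun m hm => hs m (by omega))
      (fun m hm => hs _ (by omega))
  · refine cat_chain G f (fun m => f (j + m)) (i + 1) (k - j) (by omega)
      (fun m hm => hc m (by omega)) (fun m hm => ?_) (fun _ => ?_)
    · show G.Adj (f (j + m)) (f (j + (m + 1)))
      have e : j + (m + 1) = j + m + 1 := by omega
      rw [e]
      exact hc (j + m) (by omega)
    · show G.Adj (f (i + 1 - 1)) (f (j + 0))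
      have e : i + 1 - 1 = i := by omega
      have e2 : j + 0 = j := by omega
      rw [e, e2]
      exact hadj
  · rw [cat_lt _ _ _ (by omega)]
    exact ha
  · have e : cat f (i + 1) (fun m => f (j + m)) (i + 1 + (k - j) - 1) = f (k - 1) := by
      rw [cat_ge _ _ _ (by omega)]
      congr 1
      omega
    rw [e]
    exact hb

lemma P_L2 : ∀ i j, i < j → j < k → f i ≠ f j := by
  intro i j hij hj heq
  obtain ⟨hk, hs, hc, ha, hb⟩ := hf
  rcases Nat.lt_or_ge (i + 1) j with hc2 | hc2
  · -- j ≥ i + 2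
    rcases Nat.lt_or_ge (j + 1) k with hjk | hjk
    · -- splice with seam f i = f j adj f (j+1)
      refine hmin (i + 1 + (k - (j + 1))) (cat f (i + 1) (fun m => f (j + 1 + m)))
        (by omega) ⟨by omega, ?_, ?_, ?_, ?_⟩
      · exact cat_mem f _ (i + 1) (k - (j + 1)) _ (fun m hm => hs m (by omega))
          (fun m hm => hs _ (by omega))
      · refine cat_chain G f (fun m => f (j + 1 + m)) (i + 1) (k - (j + 1)) (by omega)
          (fun m hm => hc m (by omega)) (fun m hm => ?_) (fun _ => ?_)
        · show G.Adj (f (j + 1 + m)) (f (j + 1 + (m + 1)))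
          have e : j + 1 + (m + 1) = j + 1 + m + 1 := by omega
          rw [e]
          exact hc (j + 1 + m) (by omega)
        · show G.Adj (f (i + 1 - 1)) (f (j + 1 + 0))
          have e : i + 1 - 1 = i := by omega
          have e2 : j + 1 + 0 = j + 1 := by omega
          rw [e, e2, heq]
          exact hc j (by omega)
      · rw [cat_lt _ _ _ (by omega)]
        exact ha
      · have e : cat f (i + 1) (fun m => f (j + 1 + m)) (i + 1 + (k - (j + 1)) - 1)
            = f (k - 1) := by
          rw [cat_ge _ _ _ (by omega)]
          congr 1
          omega
        rw [e]
        exact hb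
    · -- j = k - 1 : use prefix
      have hj1 : j = k - 1 := by omega
      refine hmin (i + 1) f (by omega) ⟨by omega, fun m hm => hs m (by omega),
        fun m hm => hc m (by omega), ha, ?_⟩
      have e : i + 1 - 1 = i := by omega
      rw [e, heq, hj1]
      exact hb
  · -- j = i + 1, adjacent
    have : j = i + 1 := by omega
    subst this
    have := hc i (by omega)
    rw [heq] at this
    exact G.irrefl this

lemma P_L3 : ∀ i, i < k → G.Adj a (f i) → i = 0 := by
  intro i hi hadj
  by_contra hne
  obtain ⟨hk, hs, hc, ha, hb⟩ := hf
  refine hmin (k - i) (fun m => f (i + m)) (by omega) ⟨by omega,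
    fun m hm => hs _ (by omega), fun m hm => ?_, by simpa using hadj, ?_⟩
  · show G.Adj (f (i + m)) (f (i + (m + 1)))
    have e : i + (m + 1) = i + m + 1 := by omega
    rw [e]
    exact hc (i + m) (by omega)
  · show G.Adj b (f (i + (k - i - 1)))
    have e : i + (k - i - 1) = k - 1 := by omega
    rw [e]
    exact hb

lemma P_L4 : ∀ i, i < k → G.Adj b (f i) → i = k - 1 := by
  intro i hi hadj
  by_contra hne
  obtain ⟨hk, hs, hc, ha, hb⟩ := hf
  refine hmin (i + 1) f (by omega) ⟨by omega, fun m hm => hs m (by omega),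
    fun m hm => hc m (by omega), ha, ?_⟩
  have e : i + 1 - 1 = i := by omega
  rw [e]
  exact hadj

lemma P_L5 : ∀ v ∈ s, ∀ i j, i + 3 ≤ j → j < k → G.Adj v (f i) → ¬ G.Adj v (f j) := by
  intro v hv i j hij hj h1 h2
  obtain ⟨hk, hs, hc, ha, hb⟩ := hf
  refine hmin (i + 2 + (k - j)) (cat (cat f (i + 1) (fun _ => v)) (i + 2)
    (fun m => f (j + m))) (by omega) ⟨by omega, ?_, ?_, ?_, ?_⟩
  · refine cat_mem _ _ (i + 2) (k - j) _ ?_ (fun m hm => hs _ (by omega))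
    exact cat_mem f _ (i + 1) 1 _ (fun m hm => hs m (by omega)) (fun m _ => hv)
  · refine cat_chain G (cat f (i + 1) (fun _ => v)) (fun m => f (j + m)) (i + 2) (k - j)
      (by omega) ?_ (fun m hm => ?_) (fun _ => ?_)
    · refine cat_chain G f (fun _ => v) (i + 1) 1 (by omega) (fun m hm => hc m (by omega))
        (fun m hm => absurd hm (by omega)) (fun _ => ?_)
      · show G.Adj (f (i + 1 - 1)) v
        have e : i + 1 - 1 = i := by omega
        rw [e]
        exact h1.symm
    · show G.Adj (f (j + m)) (f (j + (m + 1)))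
      have e : j + (m + 1) = j + m + 1 := by omega
      rw [e]
      exact hc (j + m) (by omega)
    · show G.Adj (cat f (i + 1) (fun _ => v) (i + 2 - 1)) (f (j + 0))
      have e : cat f (i + 1) (fun _ => v) (i + 2 - 1) = v := by
        rw [cat_ge _ _ _ (by omega)]
      have e2 : j + 0 = j := by omega
      rw [e, e2]
      exact h2
  · rw [cat_lt _ _ _ (by omega), cat_lt _ _ _ (by omega)]
    exact ha
  · have e : cat (cat f (i + 1) (fun _ => v)) (i + 2) (fun m => f (j + m))
        (i + 2 + (k - j) - 1) = f (k - 1) := by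
      rw [cat_ge _ _ _ (by omega)]
      congr 1
      omega
    rw [e]
    exact hb

lemma P_L6 : ∀ v ∈ s, G.Adj a v → ∀ j, 2 ≤ j → j < k → ¬ G.Adj v (f j) := by
  intro v hv hav j hj2 hjk hadj
  obtain ⟨hk, hs, hc, ha, hb⟩ := hf
  refine hmin (1 + (k - j)) (cat (fun _ => v) 1 (fun m => f (j + m))) (by omega)
    ⟨by omega, ?_, ?_, ?_, ?_⟩
  · exact cat_mem _ _ 1 (k - j) _ (fun m _ => hv) (fun m hm => hs _ (by omega))
  · refine cat_chain G (fun _ => v) (fun m => f (j + m)) 1 (k - j) (by omega)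
      (fun m hm => absurd hm (by omega)) (fun m hm => ?_) (fun _ => ?_)
    · show G.Adj (f (j + m)) (f (j + (m + 1)))
      have e : j + (m + 1) = j + m + 1 := by omega
      rw [e]
      exact hc (j + m) (by omega)
    · show G.Adj v (f (j + 0))
      have e2 : j + 0 = j := by omega
      rw [e2]
      exact hadj
  · rw [cat_lt _ _ _ (by omega)]
    exact hav
  · have e : cat (fun _ => v) 1 (fun m => f (j + m)) (1 + (k - j) - 1) = f (k - 1) := by
      rw [cat_ge _ _ _ (by omega)]
      congr 1
      omega
    rw [e]
    exact hb

end Pmin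

def Qcand {V : Type} (G : SimpleGraph V) (s : Set V) (c : V) (f : ℕ → V) (k : ℕ)
    (g : ℕ → V) (l : ℕ) : Prop :=
  0 < l ∧ (∀ i, i < l → g i ∈ s) ∧ (∀ i, i + 1 < l → G.Adj (g i) (g (i + 1))) ∧
    G.Adj c (g 0) ∧ (∀ i m, i < l → m < k → g i ≠ f m) ∧
    (∃ m, m < k ∧ G.Adj (g (l - 1)) (f m))

section Qmin

variable {V : Type} {G : SimpleGraph V} {s : Set V} {a b c : V} {f : ℕ → V} {k : ℕ}
  {g : ℕ → V} {l : ℕ}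
  (hf : Pcand G s a b f k) (hg : Qcand G s c f k g l)
  (hlmin : ∀ l' f' g', l' < l → ¬ (Pcand G s a b f' k ∧ Qcand G s c f' k g' l'))

include hf hg hlmin

lemma Q_L1 : ∀ i j, i + 2 ≤ j → j < l → ¬ G.Adj (g i) (g j) := by
  intro i j hij hj hadj
  obtain ⟨hl, hs, hc, hc0, hne, hlast⟩ := hg
  refine hlmin (i + 1 + (l - j)) f (cat g (i + 1) (fun m => g (j + m))) (by omega)
    ⟨hf, by omega, ?_, ?_, ?_, ?_, ?_⟩
  · exact cat_mem g _ (i + 1) (l - j) _ (fun m hm => hs m (by omega))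
      (fun m hm => hs _ (by omega))
  · refine cat_chain G g (fun m => g (j + m)) (i + 1) (l - j) (by omega)
      (fun m hm => hc m (by omega)) (fun m hm => ?_) (fun _ => ?_)
    · show G.Adj (g (j + m)) (g (j + (m + 1)))
      have e : j + (m + 1) = j + m + 1 := by omega
      rw [e]
      exact hc (j + m) (by omega)
    · show G.Adj (g (i + 1 - 1)) (g (j + 0))
      have e : i + 1 - 1 = i := by omega
      have e2 : j + 0 = j := by omega
      rw [e, e2]
      exact hadj
  · rw [cat_lt _ _ _ (by omega)]
    exact hc0
  · intro i' m hi' hm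
    by_cases h : i' < i + 1
    · rw [cat_lt _ _ _ h]; exact hne i' m (by omega) hm
    · rw [cat_ge _ _ _ (by omega)]; exact hne _ m (by omega) hm
  · obtain ⟨m, hm, hadj'⟩ := hlast
    refine ⟨m, hm, ?_⟩
    have e : cat g (i + 1) (fun m => g (j + m)) (i + 1 + (l - j) - 1) = g (l - 1) := by
      rw [cat_ge _ _ _ (by omega)]
      show g (j + (i + 1 + (l - j) - 1 - (i + 1))) = g (l - 1)
      congr 1
      omega
    rw [e]
    exact hadj'

lemma Q_L2 : ∀ i j, i < j → j < l → g i ≠ g j := by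
  intro i j hij hj heq
  obtain ⟨hl, hs, hc, hc0, hne, hlast⟩ := hg
  rcases Nat.lt_or_ge (i + 1) j with hc2 | hc2
  · rcases Nat.lt_or_ge (j + 1) l with hjl | hjl
    · refine hlmin (i + 1 + (l - (j + 1))) f (cat g (i + 1) (fun m => g (j + 1 + m)))
        (by omega) ⟨hf, by omega, ?_, ?_, ?_, ?_, ?_⟩
      · exact cat_mem g _ (i + 1) (l - (j + 1)) _ (fun m hm => hs m (by omega))
          (fun m hm => hs _ (by omega))
      · refine cat_chain G g (fun m => g (j + 1 + m)) (i + 1) (l - (j + 1)) (by omega)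
          (fun m hm => hc m (by omega)) (fun m hm => ?_) (fun _ => ?_)
        · show G.Adj (g (j + 1 + m)) (g (j + 1 + (m + 1)))
          have e : j + 1 + (m + 1) = j + 1 + m + 1 := by omega
          rw [e]
          exact hc (j + 1 + m) (by omega)
        · show G.Adj (g (i + 1 - 1)) (g (j + 1 + 0))
          have e : i + 1 - 1 = i := by omega
          have e2 : j + 1 + 0 = j + 1 := by omega
          rw [e, e2, heq]
          exact hc j (by omega)
      · rw [cat_lt _ _ _ (by omega)]
        exact hc0
      · intro i' m hi' hm
        by_cases h : i' < i + 1
        · rw [cat_lt _ _ _ h]; exact hne i' m (by omega) hm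
        · rw [cat_ge _ _ _ (by omega)]; exact hne _ m (by omega) hm
      · obtain ⟨m, hm, hadj'⟩ := hlast
        refine ⟨m, hm, ?_⟩
        have e : cat g (i + 1) (fun m => g (j + 1 + m)) (i + 1 + (l - (j + 1)) - 1)
            = g (l - 1) := by
          rw [cat_ge _ _ _ (by omega)]
          show g (j + 1 + (i + 1 + (l - (j + 1)) - 1 - (i + 1))) = g (l - 1)
          congr 1
          omega
        rw [e]
        exact hadj'
    · -- j = l - 1
      have hj1 : j = l - 1 := by omega
      refine hlmin (i + 1) f g (by omega) ⟨hf, by omega,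
        fun m hm => hs m (by omega), fun m hm => hc m (by omega), hc0,
        fun i' m hi' hm => hne i' m (by omega) hm, ?_⟩
      obtain ⟨m, hm, hadj'⟩ := hlast
      refine ⟨m, hm, ?_⟩
      have e : i + 1 - 1 = i := by omega
      rw [e, heq, hj1]
      exact hadj'
  · have : j = i + 1 := by omega
    subst this
    have := hc i (by omega)
    rw [heq] at this
    exact G.irrefl this

lemma Q_L3 : ∀ i, i < l → G.Adj c (g i) → i = 0 := by
  intro i hi hadj
  by_contra hne0
  obtain ⟨hl, hs, hc, hc0, hne, hlast⟩ := hg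
  refine hlmin (l - i) f (fun m => g (i + m)) (by omega) ⟨hf, by omega,
    fun m hm => hs _ (by omega), fun m hm => ?_, by simpa using hadj,
    fun i' m hi' hm => hne _ m (by omega) hm, ?_⟩
  · show G.Adj (g (i + m)) (g (i + (m + 1)))
    have e : i + (m + 1) = i + m + 1 := by omega
    rw [e]
    exact hc (i + m) (by omega)
  · obtain ⟨m, hm, hadj'⟩ := hlast
    refine ⟨m, hm, ?_⟩
    show G.Adj (g (i + (l - i - 1))) (f m)
    have e : i + (l - i - 1) = l - 1 := by omega
    rw [e]
    exact hadj'

lemma Q_L4 : ∀ i, i + 1 < l → ∀ m, m < k → ¬ G.Adj (g i) (f m) := by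
  intro i hi m hm hadj
  obtain ⟨hl, hs, hc, hc0, hne, hlast⟩ := hg
  refine hlmin (i + 1) f g (by omega) ⟨hf, by omega, fun m' hm' => hs m' (by omega),
    fun m' hm' => hc m' (by omega), hc0,
    fun i' m' hi' hm' => hne i' m' (by omega) hm', ?_⟩
  refine ⟨m, hm, ?_⟩
  have e : i + 1 - 1 = i := by omega
  rw [e]
  exact hadj

lemma Q_L5 (hkmin : ∀ k' f', k' < k → ¬ Pcand G s a b f' k')
    (hB : ∀ f', Pcand G s a b f' k → ∀ m, m < k → ¬ G.Adj c (f' m)) :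
    ∀ i1 i2, i2 < k → G.Adj (g (l - 1)) (f i1) → G.Adj (g (l - 1)) (f i2) →
      i1 < i2 → i2 = i1 + 1 := by
  intro i1 i2 hi2 h1 h2 hlt
  by_contra hne2
  have hts : g (l - 1) ∈ s := hg.2.1 _ (by have := hg.1; omega)
  rcases Nat.lt_or_ge i2 (i1 + 3) with hcase | hcase
  swap
  · exact P_L5 hf hkmin _ hts i1 i2 hcase hi2 h1 h2
  · -- i2 = i1 + 2
    have hi2e : i2 = i1 + 2 := by omega
    subst hi2e
    set t := g (l - 1) with ht
    have hf' : Pcand G s a b (fun m => if m = i1 + 1 then t else f m) k := by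
      obtain ⟨hk, hs, hc, ha, hb⟩ := hf
      refine ⟨hk, fun m hm => ?_, fun m hm => ?_, ?_, ?_⟩
      · show (if m = i1 + 1 then t else f m) ∈ s
        by_cases h : m = i1 + 1
        · rw [if_pos h]; exact hts
        · rw [if_neg h]; exact hs m hm
      · show G.Adj (if m = i1 + 1 then t else f m) (if m + 1 = i1 + 1 then t else f (m + 1))
        rcases eq_or_ne m i1 with rfl | hm1
        · rw [if_neg (by omega), if_pos (by omega)]
          exact h1.symm
        · rcases eq_or_ne m (i1 + 1) with rfl | hm2
          · rw [if_pos rfl, if_neg (by omega)]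
            exact h2
          · rw [if_neg hm2, if_neg (by omega)]
            exact hc m hm
      · show G.Adj a (if 0 = i1 + 1 then t else f 0)
        rw [if_neg (by omega)]
        exact ha
      · show G.Adj b (if k - 1 = i1 + 1 then t else f (k - 1))
        rw [if_neg (by omega)]
        exact hb
    rcases Nat.lt_or_ge l 2 with hl1 | hl2
    · -- l = 1, so c is adjacent to t which is a vertex of the new path
      have hl1' : l = 1 := by have := hg.1; omega
      refine hB _ hf' (i1 + 1) (by omega) ?_
      show G.Adj c (if i1 + 1 = i1 + 1 then t else f (i1 + 1))
      rw [if_pos rfl, ht, hl1']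
      exact hg.2.2.2.1
    · -- l ≥ 2 : shorter Q
      have hQ2 := Q_L2 hf hg hlmin
      obtain ⟨hl, hs, hc, hc0, hne, hlast⟩ := hg
      refine hlmin (l - 1) _ g (by omega) ⟨hf', by omega,
        fun m hm => hs m (by omega), fun m hm => hc m (by omega), hc0, ?_, ?_⟩
      · intro i' m hi' hm
        by_cases h : m = i1 + 1
        · subst h
          simp only [if_pos rfl]
          exact hQ2 i' (l - 1) (by omega) (by omega)
        · simp only [if_neg h]
          exact hne i' m (by omega) hm
      · refine ⟨i1 + 1, by omega, ?_⟩
        show G.Adj (g (l - 1 - 1)) (if i1 + 1 = i1 + 1 then t else f (i1 + 1))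
        rw [if_pos rfl, ht]
        have e : l - 1 = l - 1 - 1 + 1 := by omega
        rw [e]
        exact hc (l - 1 - 1) (by omega)

end Qmin

lemma Qcand_rev {V : Type} {G : SimpleGraph V} {s : Set V} {c : V} {f : ℕ → V} {k : ℕ}
    {g : ℕ → V} {l : ℕ} (hk : 0 < k) (hg : Qcand G s c f k g l) :
    Qcand G s c (fun i => f (k - 1 - i)) k g l := by
  obtain ⟨hl, hs, hc, hc0, hne, m, hm, hlast⟩ := hg
  refine ⟨hl, hs, hc, hc0, ?_, ⟨k - 1 - m, by omega, ?_⟩⟩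
  · intro i m' hi hm'
    exact hne i (k - 1 - m') hi (by omega)
  · show G.Adj (g (l - 1)) (f (k - 1 - (k - 1 - m)))
    have e : k - 1 - (k - 1 - m) = m := by omega
    rw [e]
    exact hlast

lemma buildM {V : Type} (G : SimpleGraph V) (I : Finset V) (s : Set V)
    (m : ℕ) (hm : 2 ≤ m) (p : ℕ → V) (u : V)
    (hpmem : ∀ j, j < m → p j ∈ s ∪ {v : V | ∃ w ∈ s, G.Adj v w})
    (humem : u ∈ s ∪ {v : V | ∃ w ∈ s, G.Adj v w})
    (hpadj : ∀ j j', j < m → j' < m → (G.Adj (p j) (p j') ↔ (j' = j + 1 ∨ j = j' + 1)))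
    (hpinj : ∀ j j', j < m → j' < m → p j = p j' → j = j')
    (hpu : ∀ j, j < m → p j ≠ u)
    (huadj : ∀ j, j < m → G.Adj u (p j) → (j ≠ 0 ∧ j + 1 ≠ m))
    (h2 : ∃ j1 j2, j1 < m ∧ j2 < m ∧ j1 ≠ j2 ∧ G.Adj u (p j1) ∧ G.Adj u (p j2))
    (hIm : (I : Set V) = {u, p 0, p (m-1)}) :
    (∃ (m : ℕ) (A : Finset (Fin m)), 2 ≤ A.card ∧
      (∀ j ∈ A, (j : ℕ) ≠ 0 ∧ (j : ℕ) + 1 ≠ m) ∧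
      ∃ e : centerPath m A ↪g G,
        (∀ x, e x ∈ s ∪ {v : V | ∃ w ∈ s, G.Adj v w}) ∧
        (fun x => e x) '' {x : Option (Fin m) | x = none ∨
            ∃ j : Fin m, x = some j ∧ ((j : ℕ) = 0 ∨ (j : ℕ) + 1 = m)} = ↑I) := by
  classical
  refine ⟨m, Finset.univ.filter (fun j : Fin m => G.Adj u (p j.val)), ?_, ?_, ?_⟩
  · obtain ⟨j1, j2, h1, h2', hne, ha1, ha2⟩ := h2
    have : ({⟨j1, h1⟩, ⟨j2, h2'⟩} : Finset (Fin m)) ⊆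
        Finset.univ.filter (fun j : Fin m => G.Adj u (p j.val)) := by
      intro x hx
      simp only [Finset.mem_insert, Finset.mem_singleton] at hx
      rcases hx with rfl | rfl <;> simp [ha1, ha2]
    calc 2 = ({⟨j1, h1⟩, ⟨j2, h2'⟩} : Finset (Fin m)).card := by
              rw [Finset.card_insert_of_notMem (by simp [Fin.ext_iff, hne]),
                Finset.card_singleton]
         _ ≤ _ := Finset.card_le_card this
  · intro j hj
    simp only [Finset.mem_filter] at hj
    exact huadj j.val j.isLt hj.2
  · refine ⟨⟨⟨fun x => x.elim u (fun j => p j.val), ?_⟩, ?_⟩, ?_, ?_⟩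
    · intro x y hxy
      match x, y with
      | none, none => rfl
      | none, some j => exact absurd hxy.symm (hpu j.val j.isLt)
      | some j, none => exact absurd hxy (hpu j.val j.isLt)
      | some j, some j' =>
        simp only [Option.elim] at hxy
        exact congrArg _ (Fin.ext (hpinj j.val j'.val j.isLt j'.isLt hxy))
    · intro x y
      match x, y with
      | none, none => simp [centerPath, fromRel_adj]
      | none, some j =>
        simp only [Option.elim, centerPath, fromRel_adj, RelEmbedding.coe_mk,
          Function.Embedding.coeFn_mk]
        constructor
        · intro h
          exact ⟨by simp, Or.inl (by simp [h])⟩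
        · rintro ⟨-, h | h⟩
          · simpa using h
          · exact absurd h (by simp)
      | some j, none =>
        simp only [Option.elim, centerPath, fromRel_adj, RelEmbedding.coe_mk,
          Function.Embedding.coeFn_mk]
        constructor
        · intro h
          exact ⟨by simp, Or.inr (by simp [h.symm])⟩
        · rintro ⟨-, h | h⟩
          · exact absurd h (by simp)
          · exact (by simpa using h : G.Adj u (p j.val)).symm
      | some j, some j' =>
        simp only [Option.elim, centerPath, fromRel_adj, RelEmbedding.coe_mk,
          Function.Embedding.coeFn_mk]
        rw [hpadj j.val j'.val j.isLt j'.isLt]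
        constructor
        · intro h
          refine ⟨?_, h⟩
          intro he
          have : j = j' := by simpa using he
          subst this
          omega
        · rintro ⟨-, h⟩
          exact h
    · intro x
      match x with
      | none => exact humem
      | some j => exact hpmem j.val j.isLt
    · ext v
      simp only [Set.mem_image, Set.mem_setOf_eq, hIm]
      constructor
      · rintro ⟨x, hx | ⟨j, rfl, hj⟩, rfl⟩
        · subst hx; left; rfl
        · rcases hj with hj | hj
          · right; left
            exact congrArg p hj
          · right; right
            exact Set.mem_singleton_iff.2 (congrArg p (by omega : (j:ℕ) = m - 1))
      · rintro (rfl | rfl | rfl)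
        · exact ⟨none, Or.inl rfl, rfl⟩
        · exact ⟨some ⟨0, by omega⟩, Or.inr ⟨_, rfl, Or.inl rfl⟩, rfl⟩
        · exact ⟨some ⟨m - 1, by omega⟩, Or.inr ⟨_, rfl, Or.inr (by simp; omega)⟩, rfl⟩

lemma buildS {V : Type} (G : SimpleGraph V) (I : Finset V) (s : Set V)
    (n : Fin 3 → ℕ) (hn : ∀ i, 1 ≤ n i) (u : V) (arm : Fin 3 → ℕ → V)
    (humem : u ∈ s ∪ {v : V | ∃ w ∈ s, G.Adj v w})
    (hmem : ∀ i j, j < n i → arm i j ∈ s ∪ {v : V | ∃ w ∈ s, G.Adj v w})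
    (hcadj : ∀ i j, j < n i → (G.Adj u (arm i j) ↔ j = 0))
    (haadj : ∀ i i' j j', j < n i → j' < n i' →
      (G.Adj (arm i j) (arm i' j') ↔ (i = i' ∧ (j' = j + 1 ∨ j = j' + 1))))
    (hinj : ∀ i i' j j', j < n i → j' < n i' → arm i j = arm i' j' → i = i' ∧ j = j')
    (hinju : ∀ i j, j < n i → arm i j ≠ u)
    (hIm : (I : Set V) = {arm 0 (n 0 - 1), arm 1 (n 1 - 1), arm 2 (n 2 - 1)}) :
    (∃ n : Fin 3 → ℕ, (∀ i, 1 ≤ n i) ∧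
      ∃ e : spiderS n ↪g G,
        (∀ x, e x ∈ s ∪ {v : V | ∃ w ∈ s, G.Adj v w}) ∧
        (fun x => e x) '' {x | ∃ y : Σ i : Fin 3, Fin (n i),
            x = some y ∧ (y.2 : ℕ) + 1 = n y.1} = ↑I) := by
  classical
  refine ⟨n, hn, ⟨⟨fun x => x.elim u (fun y => arm y.1 y.2.val), ?_⟩, ?_⟩, ?_, ?_⟩
  · intro x y hxy
    match x, y with
    | none, none => rfl
    | none, some y => exact absurd hxy.symm (hinju y.1 y.2.val y.2.isLt)
    | some y, none => exact absurd hxy (hinju y.1 y.2.val y.2.isLt)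
    | some ⟨i, j⟩, some ⟨i', j'⟩ =>
      simp only [Option.elim] at hxy
      obtain ⟨hi, hj⟩ := hinj i i' j.val j'.val j.isLt j'.isLt hxy
      subst hi
      exact congrArg _ (congrArg _ (Fin.ext hj))
  · intro x y
    match x, y with
    | none, none => simp [spiderS, fromRel_adj]
    | none, some ⟨i, j⟩ =>
      simp only [Option.elim, spiderS, fromRel_adj, RelEmbedding.coe_mk,
        Function.Embedding.coeFn_mk]
      rw [hcadj i j.val j.isLt]
      constructor
      · intro h; exact ⟨by simp, Or.inl h⟩
      · rintro ⟨-, h | h⟩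
        · exact h
        · exact absurd h (by simp)
    | some ⟨i, j⟩, none =>
      simp only [Option.elim, spiderS, fromRel_adj, RelEmbedding.coe_mk,
        Function.Embedding.coeFn_mk]
      constructor
      · intro h
        exact ⟨by simp, Or.inr ((hcadj i j.val j.isLt).1 h.symm)⟩
      · rintro ⟨-, h | h⟩
        · exact absurd h (by simp)
        · exact ((hcadj i j.val j.isLt).2 h).symm
    | some ⟨i, j⟩, some ⟨i', j'⟩ =>
      simp only [Option.elim, spiderS, fromRel_adj, RelEmbedding.coe_mk,
        Function.Embedding.coeFn_mk]
      rw [haadj i i' j.val j'.val j.isLt j'.isLt]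
      constructor
      · rintro ⟨rfl, h | h⟩
        · refine ⟨?_, Or.inl ⟨rfl, h⟩⟩
          intro he
          have hee : (⟨i, j⟩ : Σ i : Fin 3, Fin (n i)) = ⟨i, j'⟩ := by
            exact Option.some_injective _ he
          have : j = j' := by
            simpa using hee
          omega
        · refine ⟨?_, Or.inr ⟨rfl, h⟩⟩
          intro he
          have hee : (⟨i, j⟩ : Σ i : Fin 3, Fin (n i)) = ⟨i, j'⟩ := by
            exact Option.some_injective _ he
          have : j = j' := by
            simpa using hee
          omega
      · rintro ⟨hne, ⟨rfl, h⟩ | ⟨rfl, h⟩⟩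
        · exact ⟨rfl, Or.inl h⟩
        · exact ⟨rfl, Or.inr h⟩
  · intro x
    match x with
    | none => exact humem
    | some ⟨i, j⟩ => exact hmem i j.val j.isLt
  · ext v
    simp only [Set.mem_image, Set.mem_setOf_eq, hIm]
    constructor
    · rintro ⟨x, ⟨⟨i, j⟩, rfl, hj⟩, rfl⟩
      have hj' : (j : ℕ) + 1 = n i := hj
      have harm : arm i (j : ℕ) = arm i (n i - 1) := congrArg _ (by omega)
      show arm i (j : ℕ) ∈ ({arm 0 (n 0 - 1), arm 1 (n 1 - 1), arm 2 (n 2 - 1)} : Set V)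
      rw [harm]
      fin_cases i
      · left; rfl
      · right; left; rfl
      · right; right; rfl
    · rintro (rfl | rfl | rfl)
      · exact ⟨some ⟨0, ⟨n 0 - 1, by have := hn 0; omega⟩⟩, ⟨_, rfl, by simp; have := hn 0; omega⟩, rfl⟩
      · exact ⟨some ⟨1, ⟨n 1 - 1, by have := hn 1; omega⟩⟩, ⟨_, rfl, by simp; have := hn 1; omega⟩, rfl⟩
      · exact ⟨some ⟨2, ⟨n 2 - 1, by have := hn 2; omega⟩⟩, ⟨_, rfl, by simp; have := hn 2; omega⟩, rfl⟩

lemma buildT {V : Type} (G : SimpleGraph V) (I : Finset V) (s : Set V)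
    (n : Fin 3 → ℕ) (hn : ∀ i, 1 ≤ n i) (w : Fin 3 → ℕ → V)
    (hmem : ∀ i j, j ≤ n i → w i j ∈ s ∪ {v : V | ∃ x ∈ s, G.Adj v x})
    (hadj : ∀ i i' j j', j ≤ n i → j' ≤ n i' →
      (G.Adj (w i j) (w i' j') ↔
        ((j = 0 ∧ j' = 0 ∧ i ≠ i') ∨ (i = i' ∧ (j' = j + 1 ∨ j = j' + 1)))))
    (hinj : ∀ i i' j j', j ≤ n i → j' ≤ n i' → w i j = w i' j' → i = i' ∧ j = j')
    (hIm : (I : Set V) = {w 0 (n 0), w 1 (n 1), w 2 (n 2)}) :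
    (∃ n : Fin 3 → ℕ, (∀ i, 1 ≤ n i) ∧
      ∃ e : spiderT n ↪g G,
        (∀ x, e x ∈ s ∪ {v : V | ∃ x ∈ s, G.Adj v x}) ∧
        (fun x => e x) '' {x : Σ i : Fin 3, Fin (n i + 1) | (x.2 : ℕ) = n x.1} = ↑I) := by
  classical
  have hle : ∀ (i : Fin 3) (j : Fin (n i + 1)), (j : ℕ) ≤ n i := fun i j => by omega
  refine ⟨n, hn, ⟨⟨fun x => w x.1 x.2.val, ?_⟩, ?_⟩, ?_, ?_⟩
  · rintro ⟨i, j⟩ ⟨i', j'⟩ hxy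
    obtain ⟨hi, hj⟩ := hinj i i' j.val j'.val (hle i j) (hle i' j') hxy
    subst hi
    exact congrArg _ (Fin.ext hj)
  · rintro ⟨i, j⟩ ⟨i', j'⟩
    simp only [spiderT, fromRel_adj, RelEmbedding.coe_mk, Function.Embedding.coeFn_mk]
    refine (hadj i i' j.val j'.val (hle i j) (hle i' j')).trans ?_
    constructor
    · rintro (⟨h1, h2, h3⟩ | ⟨rfl, h | h⟩)
      · refine ⟨?_, Or.inl (Or.inl ⟨h1, h2, h3⟩)⟩
        intro he
        exact h3 (congrArg Sigma.fst he)
      · refine ⟨?_, Or.inl (Or.inr ⟨rfl, h⟩)⟩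
        intro he
        have : j = j' := by simpa using he
        omega
      · refine ⟨?_, Or.inr (Or.inr ⟨rfl, h⟩)⟩
        intro he
        have : j = j' := by simpa using he
        omega
    · rintro ⟨hne, (⟨h1, h2, h3⟩ | ⟨rfl, h⟩) | (⟨h1, h2, h3⟩ | ⟨rfl, h⟩)⟩
      · exact Or.inl ⟨h1, h2, h3⟩
      · exact Or.inr ⟨rfl, Or.inl h⟩
      · exact Or.inl ⟨h2, h1, Ne.symm h3⟩
      · exact Or.inr ⟨rfl, Or.inr h⟩
  · rintro ⟨i, j⟩
    exact hmem i j.val (hle i j)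
  · ext v
    simp only [Set.mem_image, Set.mem_setOf_eq, hIm]
    constructor
    · rintro ⟨⟨i, j⟩, hj, rfl⟩
      have hj' : (j : ℕ) = n i := hj
      show w i (j : ℕ) ∈ ({w 0 (n 0), w 1 (n 1), w 2 (n 2)} : Set V)
      rw [congrArg (w i) hj']
      fin_cases i
      · left; rfl
      · right; left; rfl
      · right; right; rfl
    · rintro (rfl | rfl | rfl)
      · exact ⟨⟨0, ⟨n 0, by omega⟩⟩, rfl, rfl⟩
      · exact ⟨⟨1, ⟨n 1, by omega⟩⟩, rfl, rfl⟩
      · exact ⟨⟨2, ⟨n 2, by omega⟩⟩, rfl, rfl⟩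

def Concl {V : Type} (G : SimpleGraph V) (I : Finset V) (s : Set V) : Prop :=
    (∃ n : Fin 3 → ℕ, (∀ i, 1 ≤ n i) ∧
      ∃ e : spiderS n ↪g G,
        (∀ x, e x ∈ s ∪ {v : V | ∃ w ∈ s, G.Adj v w}) ∧
        (fun x => e x) '' {x | ∃ y : Σ i : Fin 3, Fin (n i),
            x = some y ∧ (y.2 : ℕ) + 1 = n y.1} = ↑I) ∨
    (∃ n : Fin 3 → ℕ, (∀ i, 1 ≤ n i) ∧
      ∃ e : spiderT n ↪g G,
        (∀ x, e x ∈ s ∪ {v : V | ∃ w ∈ s, G.Adj v w}) ∧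
        (fun x => e x) '' {x : Σ i : Fin 3, Fin (n i + 1) | (x.2 : ℕ) = n x.1} = ↑I) ∨
    (∃ (m : ℕ) (A : Finset (Fin m)), 2 ≤ A.card ∧
      (∀ j ∈ A, (j : ℕ) ≠ 0 ∧ (j : ℕ) + 1 ≠ m) ∧
      ∃ e : centerPath m A ↪g G,
        (∀ x, e x ∈ s ∪ {v : V | ∃ w ∈ s, G.Adj v w}) ∧
        (fun x => e x) '' {x : Option (Fin m) | x = none ∨
            ∃ j : Fin m, x = some j ∧ ((j : ℕ) = 0 ∨ (j : ℕ) + 1 = m)} = ↑I)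

lemma caseM1 {V : Type} (G : SimpleGraph V) (I : Finset V) (s : Set V) (a b c : V)
    (f : ℕ → V) (k : ℕ) (hk : 0 < k)
    (hfs : ∀ i, i < k → f i ∈ s)
    (hff : ∀ i j, i < k → j < k → (G.Adj (f i) (f j) ↔ (j = i + 1 ∨ i = j + 1)))
    (hfinj : ∀ i j, i < k → j < k → f i = f j → i = j)
    (hfa : ∀ i, i < k → (G.Adj a (f i) ↔ i = 0))
    (hfb : ∀ i, i < k → (G.Adj b (f i) ↔ i = k - 1))
    (has : a ∉ s) (hbs : b ∉ s) (hcs : c ∉ s)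
    (hab : a ≠ b) (hac : a ≠ c) (hbc : b ≠ c)
    (hnab : ¬ G.Adj a b) (hnac : ¬ G.Adj a c) (hnbc : ¬ G.Adj b c)
    (m1 m2 : ℕ) (hm1 : m1 < k) (hm2 : m2 < k) (hm12 : m1 ≠ m2)
    (hcm1 : G.Adj c (f m1)) (hcm2 : G.Adj c (f m2))
    (hI : (I : Set V) = {a, b, c}) : Concl G I s := by
  right; right
  set p : ℕ → V := fun j => if j = 0 then a else if j < k + 1 then f (j - 1) else b with hp
  have hpz : ∀ j, j = 0 → p j = a := by intro j hj; simp [hp, hj]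
  have hpm : ∀ j, 1 ≤ j → j < k + 1 → p j = f (j - 1) := by
    intro j h1 h2; simp only [hp]; rw [if_neg (by omega), if_pos h2]
  have hpl : ∀ j, j = k + 1 → p j = b := by
    intro j hj; simp only [hp]; rw [if_neg (by omega), if_neg (by omega)]
  refine buildM G I s (k + 2) (by omega) p c ?_ ?_ ?_ ?_ ?_ ?_ ?_ ?_
  · intro j hj
    rcases show j = 0 ∨ (1 ≤ j ∧ j < k + 1) ∨ j = k + 1 by omega with h | ⟨h1, h2⟩ | h
    · rw [hpz j h]
      exact Or.inr ⟨f 0, hfs 0 hk, (hfa 0 hk).2 rfl⟩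
    · rw [hpm j h1 h2]
      exact Or.inl (hfs _ (by omega))
    · rw [hpl j h]
      exact Or.inr ⟨f (k - 1), hfs _ (by omega), (hfb _ (by omega)).2 rfl⟩
  · exact Or.inr ⟨f m1, hfs _ hm1, hcm1⟩
  · intro j j' hj hj'
    rcases show j = 0 ∨ (1 ≤ j ∧ j < k + 1) ∨ j = k + 1 by omega with h | ⟨h1, h2⟩ | h <;>
      rcases show j' = 0 ∨ (1 ≤ j' ∧ j' < k + 1) ∨ j' = k + 1 by omega with
        h' | ⟨h1', h2'⟩ | h'
    · subst h; subst h'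
      rw [hpz 0 rfl]
      exact iff_of_false (G.irrefl) (by omega)
    · subst h
      rw [hpz 0 rfl, hpm j' h1' h2', hfa _ (by omega)]
      omega
    · subst h; subst h'
      rw [hpz 0 rfl, hpl _ rfl]
      exact iff_of_false hnab (by omega)
    · subst h'
      rw [hpz 0 rfl, hpm j h1 h2, G.adj_comm, hfa _ (by omega)]
      omega
    · rw [hpm j h1 h2, hpm j' h1' h2', hff _ _ (by omega) (by omega)]
      omega
    · subst h'
      rw [hpm j h1 h2, hpl _ rfl, G.adj_comm, hfb _ (by omega)]
      omega
    · subst h; subst h'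
      rw [hpl _ rfl, hpz 0 rfl]
      exact iff_of_false (fun hh => hnab hh.symm) (by omega)
    · subst h
      rw [hpl _ rfl, hpm j' h1' h2', hfb _ (by omega)]
      omega
    · subst h; subst h'
      rw [hpl _ rfl]
      exact iff_of_false (G.irrefl) (by omega)
  · intro j j' hj hj' heq
    rcases show j = 0 ∨ (1 ≤ j ∧ j < k + 1) ∨ j = k + 1 by omega with h | ⟨h1, h2⟩ | h <;>
      rcases show j' = 0 ∨ (1 ≤ j' ∧ j' < k + 1) ∨ j' = k + 1 by omega with
        h' | ⟨h1', h2'⟩ | h'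
    · omega
    · rw [hpz j h, hpm j' h1' h2'] at heq
      exact absurd (hfs _ (by omega)) (heq ▸ has)
    · rw [hpz j h, hpl j' h'] at heq
      exact absurd heq hab
    · rw [hpm j h1 h2, hpz j' h'] at heq
      exact absurd (hfs _ (by omega)) (heq.symm ▸ has)
    · have heq' : f (j - 1) = f (j' - 1) := by
        rw [← hpm j h1 h2, ← hpm j' h1' h2']; exact heq
      have := hfinj (j - 1) (j' - 1) (by omega) (by omega) heq'
      omega
    · rw [hpm j h1 h2, hpl j' h'] at heq
      exact absurd (hfs _ (by omega)) (heq ▸ hbs)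
    · rw [hpl j h, hpz j' h'] at heq
      exact absurd heq.symm hab
    · rw [hpl j h, hpm j' h1' h2'] at heq
      exact absurd (hfs _ (by omega)) (heq.symm ▸ hbs)
    · omega
  · intro j hj
    rcases show j = 0 ∨ (1 ≤ j ∧ j < k + 1) ∨ j = k + 1 by omega with h | ⟨h1, h2⟩ | h
    · rw [hpz j h]; exact fun hh => hac hh
    · rw [hpm j h1 h2]; intro hh; exact hcs (hh ▸ hfs _ (by omega))
    · rw [hpl j h]; exact fun hh => hbc hh
  · intro j hj hadj
    constructor
    · intro h0
      rw [hpz j h0] at hadj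
      exact hnac hadj.symm
    · intro hlast
      rw [hpl j (by omega)] at hadj
      exact hnbc hadj.symm
  · refine ⟨m1 + 1, m2 + 1, by omega, by omega, by omega, ?_, ?_⟩
    · rw [hpm _ (by omega) (by omega)]
      simpa using hcm1
    · rw [hpm _ (by omega) (by omega)]
      simpa using hcm2
  · rw [hI, hpz 0 rfl, hpl (k + 2 - 1) (by omega)]
    ext v
    simp only [Set.mem_insert_iff, Set.mem_singleton_iff]
    tauto

lemma caseM2 {V : Type} (G : SimpleGraph V) (I : Finset V) (s : Set V) (a b c : V)
    (g : ℕ → V) (E : ℕ) (hE : 0 < E) (h : ℕ → V) (r : ℕ)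
    (hgs : ∀ i, i < E → g i ∈ s) (hhs : ∀ j, j < r → h j ∈ s)
    (hgg : ∀ i j, i < E → j < E → (G.Adj (g i) (g j) ↔ (j = i + 1 ∨ i = j + 1)))
    (hhh : ∀ i j, i < r → j < r → (G.Adj (h i) (h j) ↔ (j = i + 1 ∨ i = j + 1)))
    (hgh : ∀ i j, i < E → j < r → (G.Adj (g i) (h j) ↔ (i = E - 1 ∧ j = 0)))
    (hginj : ∀ i j, i < E → j < E → g i = g j → i = j)
    (hhinj : ∀ i j, i < r → j < r → h i = h j → i = j)
    (hghne : ∀ i j, i < E → j < r → g i ≠ h j)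
    (hcg : ∀ i, i < E → (G.Adj c (g i) ↔ i = 0))
    (hch : ∀ j, j < r → ¬ G.Adj c (h j))
    (hbg : ∀ i, i < E → (G.Adj b (g i) ↔ (r = 0 ∧ i = E - 1)))
    (hbh : ∀ j, j < r → (G.Adj b (h j) ↔ j = r - 1))
    (has : a ∉ s) (hbs : b ∉ s) (hcs : c ∉ s)
    (hab : a ≠ b) (hac : a ≠ c) (hbc : b ≠ c)
    (hnab : ¬ G.Adj a b) (hnac : ¬ G.Adj a c) (hnbc : ¬ G.Adj b c)
    (h2 : ∃ j1 j2, j1 < E + r ∧ j2 < E + r ∧ j1 ≠ j2 ∧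
      G.Adj a (if j1 < E then g j1 else h (j1 - E)) ∧
      G.Adj a (if j2 < E then g j2 else h (j2 - E)))
    (hI : (I : Set V) = {a, b, c}) : Concl G I s := by
  right; right
  set q : ℕ → V := fun j => if j = 0 then c else if j < E + 1 then g (j - 1)
    else if j < E + r + 1 then h (j - E - 1) else b with hq
  have hq0 : ∀ j, j = 0 → q j = c := by intro j hj; simp [hq, hj]
  have hqg : ∀ j, 1 ≤ j → j < E + 1 → q j = g (j - 1) := by
    intro j h1 h2; simp only [hq]; rw [if_neg (by omega), if_pos h2]
  have hqh : ∀ j, E + 1 ≤ j → j < E + r + 1 → q j = h (j - E - 1) := by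
    intro j h1 h2; simp only [hq]; rw [if_neg (by omega), if_neg (by omega), if_pos h2]
  have hqb : ∀ j, j = E + r + 1 → q j = b := by
    intro j hj; simp only [hq]; rw [if_neg (by omega), if_neg (by omega), if_neg (by omega)]
  have zone : ∀ j, j < E + r + 2 →
      j = 0 ∨ (1 ≤ j ∧ j < E + 1) ∨ (E + 1 ≤ j ∧ j < E + r + 1) ∨ j = E + r + 1 := by
    intro j hj; omega
  obtain ⟨j1, j2, hj1, hj2, hj12, ha1, ha2⟩ := h2
  refine buildM G I s (E + r + 2) (by omega) q a ?_ ?_ ?_ ?_ ?_ ?_ ?_ ?_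
  · intro j hj
    rcases zone j hj with h0 | ⟨h1, h2⟩ | ⟨h1, h2⟩ | h0
    · rw [hq0 j h0]
      exact Or.inr ⟨g 0, hgs 0 hE, (hcg 0 hE).2 rfl⟩
    · rw [hqg j h1 h2]; exact Or.inl (hgs _ (by omega))
    · rw [hqh j h1 h2]; exact Or.inl (hhs _ (by omega))
    · rw [hqb j h0]
      rcases Nat.eq_zero_or_pos r with hr | hr
      · exact Or.inr ⟨g (E - 1), hgs _ (by omega), (hbg _ (by omega)).2 ⟨hr, rfl⟩⟩
      · exact Or.inr ⟨h (r - 1), hhs _ (by omega), (hbh _ (by omega)).2 rfl⟩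
  · refine Or.inr ⟨if j1 < E then g j1 else h (j1 - E), ?_, ha1⟩
    by_cases hc1 : j1 < E
    · rw [if_pos hc1]; exact hgs _ hc1
    · rw [if_neg hc1]; exact hhs _ (by omega)
  · intro j j' hj hj'
    rcases zone j hj with h0 | ⟨h1, h2⟩ | ⟨h1, h2⟩ | h0 <;>
      rcases zone j' hj' with h0' | ⟨h1', h2'⟩ | ⟨h1', h2'⟩ | h0'
    · subst h0; subst h0'
      rw [hq0 0 rfl]; exact iff_of_false (G.irrefl) (by omega)
    · subst h0
      rw [hq0 0 rfl, hqg j' h1' h2', hcg _ (by omega)]; omega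
    · subst h0
      rw [hq0 0 rfl, hqh j' h1' h2']
      exact iff_of_false (hch _ (by omega)) (by omega)
    · subst h0; subst h0'
      rw [hq0 0 rfl, hqb _ rfl]
      exact iff_of_false (fun hh => hnbc hh.symm) (by omega)
    · subst h0'
      rw [hq0 0 rfl, hqg j h1 h2, G.adj_comm, hcg _ (by omega)]; omega
    · rw [hqg j h1 h2, hqg j' h1' h2', hgg _ _ (by omega) (by omega)]; omega
    · rw [hqg j h1 h2, hqh j' h1' h2', hgh _ _ (by omega) (by omega)]; omega
    · subst h0'
      rw [hqg j h1 h2, hqb _ rfl, G.adj_comm, hbg _ (by omega)]; omega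
    · subst h0'
      rw [hq0 0 rfl, hqh j h1 h2]
      exact iff_of_false (fun hh => hch _ (by omega) hh.symm) (by omega)
    · rw [hqh j h1 h2, hqg j' h1' h2', G.adj_comm, hgh _ _ (by omega) (by omega)]; omega
    · rw [hqh j h1 h2, hqh j' h1' h2', hhh _ _ (by omega) (by omega)]; omega
    · subst h0'
      rw [hqh j h1 h2, hqb _ rfl, G.adj_comm, hbh _ (by omega)]; omega
    · subst h0; subst h0'
      rw [hqb _ rfl, hq0 0 rfl]
      exact iff_of_false hnbc (by omega)
    · subst h0
      rw [hqb _ rfl, hqg j' h1' h2', hbg _ (by omega)]; omega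
    · subst h0
      rw [hqb _ rfl, hqh j' h1' h2', hbh _ (by omega)]; omega
    · subst h0; subst h0'
      rw [hqb _ rfl]; exact iff_of_false (G.irrefl) (by omega)
  · intro j j' hj hj' heq
    rcases zone j hj with h0 | ⟨h1, h2⟩ | ⟨h1, h2⟩ | h0 <;>
      rcases zone j' hj' with h0' | ⟨h1', h2'⟩ | ⟨h1', h2'⟩ | h0'
    · omega
    · rw [hq0 j h0, hqg j' h1' h2'] at heq
      exact absurd (hgs _ (by omega)) (heq ▸ hcs)
    · rw [hq0 j h0, hqh j' h1' h2'] at heq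
      exact absurd (hhs _ (by omega)) (heq ▸ hcs)
    · rw [hq0 j h0, hqb j' h0'] at heq
      exact absurd heq.symm hbc
    · rw [hqg j h1 h2, hq0 j' h0'] at heq
      exact absurd (hgs _ (by omega)) (heq.symm ▸ hcs)
    · have := hginj (j - 1) (j' - 1) (by omega) (by omega)
        (by rw [← hqg j h1 h2, ← hqg j' h1' h2']; exact heq)
      omega
    · exact absurd (by rw [← hqg j h1 h2, ← hqh j' h1' h2']; exact heq)
        (hghne _ _ (by omega) (by omega))
    · rw [hqg j h1 h2, hqb j' h0'] at heq
      exact absurd (hgs _ (by omega)) (heq ▸ hbs)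
    · rw [hqh j h1 h2, hq0 j' h0'] at heq
      exact absurd (hhs _ (by omega)) (heq.symm ▸ hcs)
    · exact absurd (by rw [← hqg j' h1' h2', ← hqh j h1 h2]; exact heq.symm)
        (hghne _ _ (by omega) (by omega))
    · have := hhinj (j - E - 1) (j' - E - 1) (by omega) (by omega)
        (by rw [← hqh j h1 h2, ← hqh j' h1' h2']; exact heq)
      omega
    · rw [hqh j h1 h2, hqb j' h0'] at heq
      exact absurd (hhs _ (by omega)) (heq ▸ hbs)
    · rw [hqb j h0, hq0 j' h0'] at heq
      exact absurd heq hbc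
    · rw [hqb j h0, hqg j' h1' h2'] at heq
      exact absurd (hgs _ (by omega)) (heq.symm ▸ hbs)
    · rw [hqb j h0, hqh j' h1' h2'] at heq
      exact absurd (hhs _ (by omega)) (heq.symm ▸ hbs)
    · omega
  · intro j hj
    rcases zone j hj with h0 | ⟨h1, h2⟩ | ⟨h1, h2⟩ | h0
    · rw [hq0 j h0]; exact fun hh => hac hh.symm
    · rw [hqg j h1 h2]; intro hh; exact has (hh ▸ hgs _ (by omega))
    · rw [hqh j h1 h2]; intro hh; exact has (hh ▸ hhs _ (by omega))
    · rw [hqb j h0]; exact fun hh => hab hh.symm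
  · intro j hj hadj
    constructor
    · intro h0
      rw [hq0 j h0] at hadj
      exact hnac hadj
    · intro hlast
      rw [hqb j (by omega)] at hadj
      exact hnab hadj
  · refine ⟨j1 + 1, j2 + 1, by omega, by omega, by omega, ?_, ?_⟩
    · by_cases hc1 : j1 < E
      · rw [hqg (j1 + 1) (by omega) (by omega)]
        rw [if_pos hc1] at ha1
        simpa using ha1
      · rw [hqh (j1 + 1) (by omega) (by omega)]
        rw [if_neg hc1] at ha1
        have e : j1 + 1 - E - 1 = j1 - E := by omega
        rw [e]
        exact ha1
    · by_cases hc2 : j2 < E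
      · rw [hqg (j2 + 1) (by omega) (by omega)]
        rw [if_pos hc2] at ha2
        simpa using ha2
      · rw [hqh (j2 + 1) (by omega) (by omega)]
        rw [if_neg hc2] at ha2
        have e : j2 + 1 - E - 1 = j2 - E := by omega
        rw [e]
        exact ha2
  · rw [hI, hq0 0 rfl, hqb (E + r + 2 - 1) (by omega)]
    ext v
    simp only [Set.mem_insert_iff, Set.mem_singleton_iff]
    tauto

theorem caseS1 {V : Type} (G : SimpleGraph V) (I : Finset V) (s : Set V) (a b c : V)
    (f : ℕ → V) (k : ℕ) (hk : 0 < k) (m0 : ℕ) (hm0 : m0 < k)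
    (g : ℕ → V) (l : ℕ)
    (hfs : ∀ i, i < k → f i ∈ s)
    (hff : ∀ i j, i < k → j < k → (G.Adj (f i) (f j) ↔ (j = i + 1 ∨ i = j + 1)))
    (hfinj : ∀ i j, i < k → j < k → f i = f j → i = j)
    (hfa : ∀ i, i < k → (G.Adj a (f i) ↔ i = 0))
    (hfb : ∀ i, i < k → (G.Adj b (f i) ↔ i = k - 1))
    (hgs : ∀ i, i < l → g i ∈ s)
    (hgg : ∀ i j, i < l → j < l → (G.Adj (g i) (g j) ↔ (j = i + 1 ∨ i = j + 1)))
    (hginj : ∀ i j, i < l → j < l → g i = g j → i = j)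
    (hgf : ∀ i m, i < l → m < k → g i ≠ f m)
    (hgfadj : ∀ i m, i < l → m < k → (G.Adj (g i) (f m) ↔ (i = l - 1 ∧ m = m0)))
    (hcf : ∀ m, m < k → (G.Adj c (f m) ↔ (l = 0 ∧ m = m0)))
    (hcg : ∀ i, i < l → (G.Adj c (g i) ↔ i = 0))
    (hag : ∀ i, i < l → ¬ G.Adj a (g i)) (hbg : ∀ i, i < l → ¬ G.Adj b (g i))
    (has : a ∉ s) (hbs : b ∉ s) (hcs : c ∉ s)
    (hab : a ≠ b) (hac : a ≠ c) (hbc : b ≠ c)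
    (hnab : ¬ G.Adj a b) (hnac : ¬ G.Adj a c) (hnbc : ¬ G.Adj b c)
    (hI : (I : Set V) = {a, b, c}) :
    (∃ n : Fin 3 → ℕ, (∀ i, 1 ≤ n i) ∧
      ∃ e : spiderS n ↪g G,
        (∀ x, e x ∈ s ∪ {v : V | ∃ w ∈ s, G.Adj v w}) ∧
        (fun x => e x) '' {x | ∃ y : Σ i : Fin 3, Fin (n i),
            x = some y ∧ (y.2 : ℕ) + 1 = n y.1} = ↑I) := by
  have hfa' : ∀ i, i < k → (G.Adj (f i) a ↔ i = 0) := by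
    intro i hi; rw [G.adj_comm]; exact hfa i hi
  have hfb' : ∀ i, i < k → (G.Adj (f i) b ↔ i = k - 1) := by
    intro i hi; rw [G.adj_comm]; exact hfb i hi
  have hcf' : ∀ m, m < k → (G.Adj (f m) c ↔ (l = 0 ∧ m = m0)) := by
    intro m hm; rw [G.adj_comm]; exact hcf m hm
  have hcg' : ∀ i, i < l → (G.Adj (g i) c ↔ i = 0) := by
    intro i hi; rw [G.adj_comm]; exact hcg i hi
  have hgfadj' : ∀ m i, m < k → i < l → (G.Adj (f m) (g i) ↔ (i = l - 1 ∧ m = m0)) := by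
    intro m i hm hi; rw [G.adj_comm]; exact hgfadj i m hi hm
  refine buildS G I s
    (fun i => if i = 0 then m0 + 1 else if i = 1 then k - m0 else l + 1)
    (by
      intro i; fin_cases i
      · show 1 ≤ m0 + 1; omega
      · show 1 ≤ k - m0; omega
      · show 1 ≤ l + 1; omega)
    (f m0)
    (fun i j => if i = 0 then (if j < m0 then f (m0 - 1 - j) else a)
      else if i = 1 then (if j + m0 + 1 < k then f (m0 + 1 + j) else b)
      else (if j < l then g (l - 1 - j) else c))
    (Or.inl (hfs m0 hm0)) ?_ ?_ ?_ ?_ ?_ ?_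
  · -- membership
    intro i j hj
    fin_cases i
    · have hj' : j < m0 + 1 := hj
      show (if j < m0 then f (m0 - 1 - j) else a) ∈ _
      by_cases h : j < m0
      · rw [if_pos h]; exact Or.inl (hfs _ (by omega))
      · rw [if_neg h]; exact Or.inr ⟨f 0, hfs 0 hk, (hfa 0 hk).2 rfl⟩
    · have hj' : j < k - m0 := hj
      show (if j + m0 + 1 < k then f (m0 + 1 + j) else b) ∈ _
      by_cases h : j + m0 + 1 < k
      · rw [if_pos h]; exact Or.inl (hfs _ (by omega))
      · rw [if_neg h]; exact Or.inr ⟨f (k - 1), hfs _ (by omega), (hfb _ (by omega)).2 rfl⟩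
    · have hj' : j < l + 1 := hj
      show (if j < l then g (l - 1 - j) else c) ∈ _
      by_cases h : j < l
      · rw [if_pos h]; exact Or.inl (hgs _ (by omega))
      · rw [if_neg h]
        rcases Nat.eq_zero_or_pos l with hl | hl
        · exact Or.inr ⟨f m0, hfs _ hm0, (hcf m0 hm0).2 ⟨hl, rfl⟩⟩
        · exact Or.inr ⟨g 0, hgs 0 hl, (hcg 0 hl).2 rfl⟩
  · -- center adjacency
    intro i j hj
    fin_cases i
    · have hj' : j < m0 + 1 := hj
      show G.Adj (f m0) (if j < m0 then f (m0 - 1 - j) else a) ↔ j = 0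
      by_cases h : j < m0
      · rw [if_pos h, hff m0 (m0 - 1 - j) hm0 (by omega)]; omega
      · rw [if_neg h, hfa' m0 hm0]; omega
    · have hj' : j < k - m0 := hj
      show G.Adj (f m0) (if j + m0 + 1 < k then f (m0 + 1 + j) else b) ↔ j = 0
      by_cases h : j + m0 + 1 < k
      · rw [if_pos h, hff m0 (m0 + 1 + j) hm0 (by omega)]; omega
      · rw [if_neg h, hfb' m0 hm0]; omega
    · have hj' : j < l + 1 := hj
      show G.Adj (f m0) (if j < l then g (l - 1 - j) else c) ↔ j = 0
      by_cases h : j < l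
      · rw [if_pos h, hgfadj' m0 (l - 1 - j) hm0 (by omega)]; omega
      · rw [if_neg h, hcf' m0 hm0]; omega
  · -- arm-arm adjacency
    intro i i' j j' hj hj'
    fin_cases i <;> fin_cases i'
    · have h1 : j < m0 + 1 := hj
      have h2 : j' < m0 + 1 := hj'
      show G.Adj (if j < m0 then f (m0 - 1 - j) else a)
          (if j' < m0 then f (m0 - 1 - j') else a) ↔ ((0 : Fin 3) = 0 ∧ _)
      rw [and_iff_right rfl]
      by_cases hc1 : j < m0 <;> by_cases hc2 : j' < m0
      · rw [if_pos hc1, if_pos hc2, hff _ _ (by omega) (by omega)]; omega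
      · rw [if_pos hc1, if_neg hc2, hfa' _ (by omega)]; omega
      · rw [if_neg hc1, if_pos hc2, hfa _ (by omega)]; omega
      · rw [if_neg hc1, if_neg hc2]; exact iff_of_false (G.irrefl) (by omega)
    · have h1 : j < m0 + 1 := hj
      have h2 : j' < k - m0 := hj'
      refine iff_of_false ?_ (by simp)
      show ¬ G.Adj (if j < m0 then f (m0 - 1 - j) else a)
          (if j' + m0 + 1 < k then f (m0 + 1 + j') else b)
      by_cases hc1 : j < m0 <;> by_cases hc2 : j' + m0 + 1 < k
      · rw [if_pos hc1, if_pos hc2, hff _ _ (by omega) (by omega)]; omega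
      · rw [if_pos hc1, if_neg hc2, hfb' _ (by omega)]; omega
      · rw [if_neg hc1, if_pos hc2, hfa _ (by omega)]; omega
      · rw [if_neg hc1, if_neg hc2]; exact hnab
    · have h1 : j < m0 + 1 := hj
      have h2 : j' < l + 1 := hj'
      refine iff_of_false ?_ (by simp)
      show ¬ G.Adj (if j < m0 then f (m0 - 1 - j) else a)
          (if j' < l then g (l - 1 - j') else c)
      by_cases hc1 : j < m0 <;> by_cases hc2 : j' < l
      · rw [if_pos hc1, if_pos hc2, hgfadj' _ _ (by omega) (by omega)]; omega
      · rw [if_pos hc1, if_neg hc2, hcf' _ (by omega)]; omega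
      · rw [if_neg hc1, if_pos hc2]; exact hag _ (by omega)
      · rw [if_neg hc1, if_neg hc2]; exact hnac
    · have h1 : j < k - m0 := hj
      have h2 : j' < m0 + 1 := hj'
      refine iff_of_false ?_ (by simp)
      show ¬ G.Adj (if j + m0 + 1 < k then f (m0 + 1 + j) else b)
          (if j' < m0 then f (m0 - 1 - j') else a)
      by_cases hc1 : j + m0 + 1 < k <;> by_cases hc2 : j' < m0
      · rw [if_pos hc1, if_pos hc2, hff _ _ (by omega) (by omega)]; omega
      · rw [if_pos hc1, if_neg hc2, hfa' _ (by omega)]; omega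
      · rw [if_neg hc1, if_pos hc2, hfb _ (by omega)]; omega
      · rw [if_neg hc1, if_neg hc2]; exact fun hh => hnab hh.symm
    · have h1 : j < k - m0 := hj
      have h2 : j' < k - m0 := hj'
      show G.Adj (if j + m0 + 1 < k then f (m0 + 1 + j) else b)
          (if j' + m0 + 1 < k then f (m0 + 1 + j') else b) ↔ ((1 : Fin 3) = 1 ∧ _)
      rw [and_iff_right rfl]
      by_cases hc1 : j + m0 + 1 < k <;> by_cases hc2 : j' + m0 + 1 < k
      · rw [if_pos hc1, if_pos hc2, hff _ _ (by omega) (by omega)]; omega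
      · rw [if_pos hc1, if_neg hc2, hfb' _ (by omega)]; omega
      · rw [if_neg hc1, if_pos hc2, hfb _ (by omega)]; omega
      · rw [if_neg hc1, if_neg hc2]; exact iff_of_false (G.irrefl) (by omega)
    · have h1 : j < k - m0 := hj
      have h2 : j' < l + 1 := hj'
      refine iff_of_false ?_ (by simp)
      show ¬ G.Adj (if j + m0 + 1 < k then f (m0 + 1 + j) else b)
          (if j' < l then g (l - 1 - j') else c)
      by_cases hc1 : j + m0 + 1 < k <;> by_cases hc2 : j' < l
      · rw [if_pos hc1, if_pos hc2, hgfadj' _ _ (by omega) (by omega)]; omega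
      · rw [if_pos hc1, if_neg hc2, hcf' _ (by omega)]; omega
      · rw [if_neg hc1, if_pos hc2]; exact hbg _ (by omega)
      · rw [if_neg hc1, if_neg hc2]; exact hnbc
    · have h1 : j < l + 1 := hj
      have h2 : j' < m0 + 1 := hj'
      refine iff_of_false ?_ (by simp)
      show ¬ G.Adj (if j < l then g (l - 1 - j) else c)
          (if j' < m0 then f (m0 - 1 - j') else a)
      by_cases hc1 : j < l <;> by_cases hc2 : j' < m0
      · rw [if_pos hc1, if_pos hc2, hgfadj _ _ (by omega) (by omega)]; omega
      · rw [if_pos hc1, if_neg hc2]; exact fun hh => hag _ (by omega) hh.symm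
      · rw [if_neg hc1, if_pos hc2, hcf _ (by omega)]; omega
      · rw [if_neg hc1, if_neg hc2]; exact fun hh => hnac hh.symm
    · have h1 : j < l + 1 := hj
      have h2 : j' < k - m0 := hj'
      refine iff_of_false ?_ (by simp)
      show ¬ G.Adj (if j < l then g (l - 1 - j) else c)
          (if j' + m0 + 1 < k then f (m0 + 1 + j') else b)
      by_cases hc1 : j < l <;> by_cases hc2 : j' + m0 + 1 < k
      · rw [if_pos hc1, if_pos hc2, hgfadj _ _ (by omega) (by omega)]; omega
      · rw [if_pos hc1, if_neg hc2]; exact fun hh => hbg _ (by omega) hh.symm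
      · rw [if_neg hc1, if_pos hc2, hcf _ (by omega)]; omega
      · rw [if_neg hc1, if_neg hc2]; exact fun hh => hnbc hh.symm
    · have h1 : j < l + 1 := hj
      have h2 : j' < l + 1 := hj'
      show G.Adj (if j < l then g (l - 1 - j) else c)
          (if j' < l then g (l - 1 - j') else c) ↔ ((2 : Fin 3) = 2 ∧ _)
      rw [and_iff_right rfl]
      by_cases hc1 : j < l <;> by_cases hc2 : j' < l
      · rw [if_pos hc1, if_pos hc2, hgg _ _ (by omega) (by omega)]; omega
      · rw [if_pos hc1, if_neg hc2, hcg' _ (by omega)]; omega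
      · rw [if_neg hc1, if_pos hc2, hcg _ (by omega)]; omega
      · rw [if_neg hc1, if_neg hc2]; exact iff_of_false (G.irrefl) (by omega)
  · -- injectivity between arms
    intro i i' j j' hj hj'
    fin_cases i <;> fin_cases i'
    · have h1 : j < m0 + 1 := hj
      have h2 : j' < m0 + 1 := hj'
      show (if j < m0 then f (m0 - 1 - j) else a) = (if j' < m0 then f (m0 - 1 - j') else a)
        → (0 : Fin 3) = 0 ∧ j = j'
      intro heq
      refine ⟨rfl, ?_⟩
      by_cases hc1 : j < m0 <;> by_cases hc2 : j' < m0
      · rw [if_pos hc1, if_pos hc2] at heq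
        have := hfinj _ _ (by omega) (by omega) heq; omega
      · rw [if_pos hc1, if_neg hc2] at heq
        exact absurd (hfs _ (by omega)) (heq ▸ has)
      · rw [if_neg hc1, if_pos hc2] at heq
        exact absurd (hfs _ (by omega)) (heq.symm ▸ has)
      · omega
    · have h1 : j < m0 + 1 := hj
      have h2 : j' < k - m0 := hj'
      show (if j < m0 then f (m0 - 1 - j) else a)
        = (if j' + m0 + 1 < k then f (m0 + 1 + j') else b) → (0 : Fin 3) = 1 ∧ j = j'
      intro heq
      exfalso
      by_cases hc1 : j < m0 <;> by_cases hc2 : j' + m0 + 1 < k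
      · rw [if_pos hc1, if_pos hc2] at heq
        have := hfinj _ _ (by omega) (by omega) heq; omega
      · rw [if_pos hc1, if_neg hc2] at heq
        exact absurd (hfs _ (by omega)) (heq ▸ hbs)
      · rw [if_neg hc1, if_pos hc2] at heq
        exact absurd (hfs _ (by omega)) (heq.symm ▸ has)
      · rw [if_neg hc1, if_neg hc2] at heq
        exact hab heq
    · have h1 : j < m0 + 1 := hj
      have h2 : j' < l + 1 := hj'
      show (if j < m0 then f (m0 - 1 - j) else a)
        = (if j' < l then g (l - 1 - j') else c) → (0 : Fin 3) = 2 ∧ j = j'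
      intro heq
      exfalso
      by_cases hc1 : j < m0 <;> by_cases hc2 : j' < l
      · rw [if_pos hc1, if_pos hc2] at heq
        exact hgf _ _ (by omega) (by omega) heq.symm
      · rw [if_pos hc1, if_neg hc2] at heq
        exact absurd (hfs _ (by omega)) (heq ▸ hcs)
      · rw [if_neg hc1, if_pos hc2] at heq
        exact absurd (hgs _ (by omega)) (heq.symm ▸ has)
      · rw [if_neg hc1, if_neg hc2] at heq
        exact hac heq
    · have h1 : j < k - m0 := hj
      have h2 : j' < m0 + 1 := hj'
      show (if j + m0 + 1 < k then f (m0 + 1 + j) else b)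
        = (if j' < m0 then f (m0 - 1 - j') else a) → (1 : Fin 3) = 0 ∧ j = j'
      intro heq
      exfalso
      by_cases hc1 : j + m0 + 1 < k <;> by_cases hc2 : j' < m0
      · rw [if_pos hc1, if_pos hc2] at heq
        have := hfinj _ _ (by omega) (by omega) heq; omega
      · rw [if_pos hc1, if_neg hc2] at heq
        exact absurd (hfs _ (by omega)) (heq ▸ has)
      · rw [if_neg hc1, if_pos hc2] at heq
        exact absurd (hfs _ (by omega)) (heq.symm ▸ hbs)
      · rw [if_neg hc1, if_neg hc2] at heq
        exact hab heq.symm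
    · have h1 : j < k - m0 := hj
      have h2 : j' < k - m0 := hj'
      show (if j + m0 + 1 < k then f (m0 + 1 + j) else b)
        = (if j' + m0 + 1 < k then f (m0 + 1 + j') else b) → (1 : Fin 3) = 1 ∧ j = j'
      intro heq
      refine ⟨rfl, ?_⟩
      by_cases hc1 : j + m0 + 1 < k <;> by_cases hc2 : j' + m0 + 1 < k
      · rw [if_pos hc1, if_pos hc2] at heq
        have := hfinj _ _ (by omega) (by omega) heq; omega
      · rw [if_pos hc1, if_neg hc2] at heq
        exact absurd (hfs _ (by omega)) (heq ▸ hbs)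
      · rw [if_neg hc1, if_pos hc2] at heq
        exact absurd (hfs _ (by omega)) (heq.symm ▸ hbs)
      · omega
    · have h1 : j < k - m0 := hj
      have h2 : j' < l + 1 := hj'
      show (if j + m0 + 1 < k then f (m0 + 1 + j) else b)
        = (if j' < l then g (l - 1 - j') else c) → (1 : Fin 3) = 2 ∧ j = j'
      intro heq
      exfalso
      by_cases hc1 : j + m0 + 1 < k <;> by_cases hc2 : j' < l
      · rw [if_pos hc1, if_pos hc2] at heq
        exact hgf _ _ (by omega) (by omega) heq.symm
      · rw [if_pos hc1, if_neg hc2] at heq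
        exact absurd (hfs _ (by omega)) (heq ▸ hcs)
      · rw [if_neg hc1, if_pos hc2] at heq
        exact absurd (hgs _ (by omega)) (heq.symm ▸ hbs)
      · rw [if_neg hc1, if_neg hc2] at heq
        exact hbc heq
    · have h1 : j < l + 1 := hj
      have h2 : j' < m0 + 1 := hj'
      show (if j < l then g (l - 1 - j) else c)
        = (if j' < m0 then f (m0 - 1 - j') else a) → (2 : Fin 3) = 0 ∧ j = j'
      intro heq
      exfalso
      by_cases hc1 : j < l <;> by_cases hc2 : j' < m0
      · rw [if_pos hc1, if_pos hc2] at heq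
        exact hgf _ _ (by omega) (by omega) heq
      · rw [if_pos hc1, if_neg hc2] at heq
        exact absurd (hgs _ (by omega)) (heq ▸ has)
      · rw [if_neg hc1, if_pos hc2] at heq
        exact absurd (hfs _ (by omega)) (heq.symm ▸ hcs)
      · rw [if_neg hc1, if_neg hc2] at heq
        exact hac heq.symm
    · have h1 : j < l + 1 := hj
      have h2 : j' < k - m0 := hj'
      show (if j < l then g (l - 1 - j) else c)
        = (if j' + m0 + 1 < k then f (m0 + 1 + j') else b) → (2 : Fin 3) = 1 ∧ j = j'
      intro heq
      exfalso
      by_cases hc1 : j < l <;> by_cases hc2 : j' + m0 + 1 < k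
      · rw [if_pos hc1, if_pos hc2] at heq
        exact hgf _ _ (by omega) (by omega) heq
      · rw [if_pos hc1, if_neg hc2] at heq
        exact absurd (hgs _ (by omega)) (heq ▸ hbs)
      · rw [if_neg hc1, if_pos hc2] at heq
        exact absurd (hfs _ (by omega)) (heq.symm ▸ hcs)
      · rw [if_neg hc1, if_neg hc2] at heq
        exact hbc heq.symm
    · have h1 : j < l + 1 := hj
      have h2 : j' < l + 1 := hj'
      show (if j < l then g (l - 1 - j) else c)
        = (if j' < l then g (l - 1 - j') else c) → (2 : Fin 3) = 2 ∧ j = j'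
      intro heq
      refine ⟨rfl, ?_⟩
      by_cases hc1 : j < l <;> by_cases hc2 : j' < l
      · rw [if_pos hc1, if_pos hc2] at heq
        have := hginj _ _ (by omega) (by omega) heq; omega
      · rw [if_pos hc1, if_neg hc2] at heq
        exact absurd (hgs _ (by omega)) (heq ▸ hcs)
      · rw [if_neg hc1, if_pos hc2] at heq
        exact absurd (hgs _ (by omega)) (heq.symm ▸ hcs)
      · omega
  · -- arm vertices differ from center
    intro i j hj
    fin_cases i
    · have h1 : j < m0 + 1 := hj
      show (if j < m0 then f (m0 - 1 - j) else a) ≠ f m0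
      by_cases hc1 : j < m0
      · rw [if_pos hc1]
        intro heq
        have := hfinj _ _ (by omega) hm0 heq; omega
      · rw [if_neg hc1]
        intro heq
        exact has (heq ▸ hfs _ hm0)
    · have h1 : j < k - m0 := hj
      show (if j + m0 + 1 < k then f (m0 + 1 + j) else b) ≠ f m0
      by_cases hc1 : j + m0 + 1 < k
      · rw [if_pos hc1]
        intro heq
        have := hfinj _ _ (by omega) hm0 heq; omega
      · rw [if_neg hc1]
        intro heq
        exact hbs (heq ▸ hfs _ hm0)
    · have h1 : j < l + 1 := hj
      show (if j < l then g (l - 1 - j) else c) ≠ f m0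
      by_cases hc1 : j < l
      · rw [if_pos hc1]
        exact hgf _ _ (by omega) hm0
      · rw [if_neg hc1]
        intro heq
        exact hcs (heq ▸ hfs _ hm0)
  · -- image of tips
    have e0 : (if m0 + 1 - 1 < m0 then f (m0 - 1 - (m0 + 1 - 1)) else a) = a := by
      rw [if_neg (by omega)]
    have e1 : (if (k - m0 - 1) + m0 + 1 < k then f (m0 + 1 + (k - m0 - 1)) else b) = b := by
      rw [if_neg (by omega)]
    have e2 : (if l + 1 - 1 < l then g (l - 1 - (l + 1 - 1)) else c) = c := by
      rw [if_neg (by omega)]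
    show (I : Set V) = {if m0 + 1 - 1 < m0 then f (m0 - 1 - (m0 + 1 - 1)) else a,
      if (k - m0 - 1) + m0 + 1 < k then f (m0 + 1 + (k - m0 - 1)) else b,
      if l + 1 - 1 < l then g (l - 1 - (l + 1 - 1)) else c}
    rw [e0, e1, e2, hI]

theorem caseS2 {V : Type} (G : SimpleGraph V) (I : Finset V) (s : Set V) (a b c : V)
    (g : ℕ → V) (E : ℕ) (hE : 0 < E) (m : ℕ) (hm : m < E) (h : ℕ → V) (r : ℕ)
    (hgs : ∀ i, i < E → g i ∈ s) (hhs : ∀ j, j < r → h j ∈ s)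
    (hgg : ∀ i j, i < E → j < E → (G.Adj (g i) (g j) ↔ (j = i + 1 ∨ i = j + 1)))
    (hhh : ∀ i j, i < r → j < r → (G.Adj (h i) (h j) ↔ (j = i + 1 ∨ i = j + 1)))
    (hgh : ∀ i j, i < E → j < r → (G.Adj (g i) (h j) ↔ (i = E - 1 ∧ j = 0)))
    (hginj : ∀ i j, i < E → j < E → g i = g j → i = j)
    (hhinj : ∀ i j, i < r → j < r → h i = h j → i = j)
    (hghne : ∀ i j, i < E → j < r → g i ≠ h j)
    (hag : ∀ i, i < E → (G.Adj a (g i) ↔ i = m))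
    (hah : ∀ j, j < r → ¬ G.Adj a (h j))
    (hbg : ∀ i, i < E → (G.Adj b (g i) ↔ (r = 0 ∧ i = E - 1)))
    (hbh : ∀ j, j < r → (G.Adj b (h j) ↔ j = r - 1))
    (hcg : ∀ i, i < E → (G.Adj c (g i) ↔ i = 0))
    (hch : ∀ j, j < r → ¬ G.Adj c (h j))
    (has : a ∉ s) (hbs : b ∉ s) (hcs : c ∉ s)
    (hab : a ≠ b) (hac : a ≠ c) (hbc : b ≠ c)
    (hnab : ¬ G.Adj a b) (hnac : ¬ G.Adj a c) (hnbc : ¬ G.Adj b c)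
    (hI : (I : Set V) = {a, c, b}) :
    (∃ n : Fin 3 → ℕ, (∀ i, 1 ≤ n i) ∧
      ∃ e : spiderS n ↪g G,
        (∀ x, e x ∈ s ∪ {v : V | ∃ w ∈ s, G.Adj v w}) ∧
        (fun x => e x) '' {x | ∃ y : Σ i : Fin 3, Fin (n i),
            x = some y ∧ (y.2 : ℕ) + 1 = n y.1} = ↑I) := by
  have hag' : ∀ i, i < E → (G.Adj (g i) a ↔ i = m) := by
    intro i hi; rw [G.adj_comm]; exact hag i hi
  have hbg' : ∀ i, i < E → (G.Adj (g i) b ↔ (r = 0 ∧ i = E - 1)) := by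
    intro i hi; rw [G.adj_comm]; exact hbg i hi
  have hbh' : ∀ j, j < r → (G.Adj (h j) b ↔ j = r - 1) := by
    intro j hj; rw [G.adj_comm]; exact hbh j hj
  have hcg' : ∀ i, i < E → (G.Adj (g i) c ↔ i = 0) := by
    intro i hi; rw [G.adj_comm]; exact hcg i hi
  have hgh' : ∀ j i, j < r → i < E → (G.Adj (h j) (g i) ↔ (i = E - 1 ∧ j = 0)) := by
    intro j i hj hi; rw [G.adj_comm]; exact hgh i j hi hj
  refine buildS G I s
    (fun i => if i = 0 then 1 else if i = 1 then m + 1 else (E - 1 - m) + r + 1)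
    (by
      intro i; fin_cases i
      · show 1 ≤ 1; omega
      · show 1 ≤ m + 1; omega
      · show 1 ≤ (E - 1 - m) + r + 1; omega)
    (g m)
    (fun i j => if i = 0 then a
      else if i = 1 then (if j < m then g (m - 1 - j) else c)
      else (if j < E - 1 - m then g (m + 1 + j)
        else if j < (E - 1 - m) + r then h (j - (E - 1 - m)) else b))
    (Or.inl (hgs m hm)) ?_ ?_ ?_ ?_ ?_ ?_
  · -- membership
    intro i j hj
    fin_cases i
    · show a ∈ _
      exact Or.inr ⟨g m, hgs m hm, (hag m hm).2 rfl⟩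
    · have hj' : j < m + 1 := hj
      show (if j < m then g (m - 1 - j) else c) ∈ _
      by_cases hc1 : j < m
      · rw [if_pos hc1]; exact Or.inl (hgs _ (by omega))
      · rw [if_neg hc1]; exact Or.inr ⟨g 0, hgs 0 (by omega), (hcg 0 (by omega)).2 rfl⟩
    · have hj' : j < (E - 1 - m) + r + 1 := hj
      show (if j < E - 1 - m then g (m + 1 + j)
        else if j < (E - 1 - m) + r then h (j - (E - 1 - m)) else b) ∈ _
      by_cases hc1 : j < E - 1 - m
      · rw [if_pos hc1]; exact Or.inl (hgs _ (by omega))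
      · rw [if_neg hc1]
        by_cases hc2 : j < (E - 1 - m) + r
        · rw [if_pos hc2]; exact Or.inl (hhs _ (by omega))
        · rw [if_neg hc2]
          rcases Nat.eq_zero_or_pos r with hr | hr
          · exact Or.inr ⟨g (E - 1), hgs _ (by omega), (hbg _ (by omega)).2 ⟨hr, rfl⟩⟩
          · exact Or.inr ⟨h (r - 1), hhs _ (by omega), (hbh _ (by omega)).2 rfl⟩
  · -- center adjacency
    intro i j hj
    fin_cases i
    · have hj' : j < 1 := hj
      show G.Adj (g m) a ↔ j = 0
      rw [hag' m hm]; omega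
    · have hj' : j < m + 1 := hj
      show G.Adj (g m) (if j < m then g (m - 1 - j) else c) ↔ j = 0
      by_cases hc1 : j < m
      · rw [if_pos hc1, hgg _ _ hm (by omega)]; omega
      · rw [if_neg hc1, hcg' m hm]; omega
    · have hj' : j < (E - 1 - m) + r + 1 := hj
      show G.Adj (g m) (if j < E - 1 - m then g (m + 1 + j)
        else if j < (E - 1 - m) + r then h (j - (E - 1 - m)) else b) ↔ j = 0
      by_cases hc1 : j < E - 1 - m
      · rw [if_pos hc1, hgg _ _ hm (by omega)]; omega
      · rw [if_neg hc1]
        by_cases hc2 : j < (E - 1 - m) + r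
        · rw [if_pos hc2, hgh _ _ hm (by omega)]; omega
        · rw [if_neg hc2, hbg' m hm]; omega
  · -- arm-arm adjacency
    intro i i' j j' hj hj'
    fin_cases i <;> fin_cases i'
    · have h1 : j < 1 := hj
      have h2 : j' < 1 := hj'
      show G.Adj a a ↔ ((0 : Fin 3) = 0 ∧ _)
      exact iff_of_false (G.irrefl) (by intro hh; omega)
    · have h1 : j < 1 := hj
      have h2 : j' < m + 1 := hj'
      refine iff_of_false ?_ (by simp)
      show ¬ G.Adj a (if j' < m then g (m - 1 - j') else c)
      by_cases hc2 : j' < m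
      · rw [if_pos hc2, hag _ (by omega)]; omega
      · rw [if_neg hc2]; exact hnac
    · have h1 : j < 1 := hj
      have h2 : j' < (E - 1 - m) + r + 1 := hj'
      refine iff_of_false ?_ (by simp)
      show ¬ G.Adj a (if j' < E - 1 - m then g (m + 1 + j')
        else if j' < (E - 1 - m) + r then h (j' - (E - 1 - m)) else b)
      by_cases hc1 : j' < E - 1 - m
      · rw [if_pos hc1, hag _ (by omega)]; omega
      · rw [if_neg hc1]
        by_cases hc2 : j' < (E - 1 - m) + r
        · rw [if_pos hc2]; exact hah _ (by omega)
        · rw [if_neg hc2]; exact hnab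
    · have h1 : j < m + 1 := hj
      have h2 : j' < 1 := hj'
      refine iff_of_false ?_ (by simp)
      show ¬ G.Adj (if j < m then g (m - 1 - j) else c) a
      by_cases hc1 : j < m
      · rw [if_pos hc1, hag' _ (by omega)]; omega
      · rw [if_neg hc1]; exact fun hh => hnac hh.symm
    · have h1 : j < m + 1 := hj
      have h2 : j' < m + 1 := hj'
      show G.Adj (if j < m then g (m - 1 - j) else c)
          (if j' < m then g (m - 1 - j') else c) ↔ ((1 : Fin 3) = 1 ∧ _)
      rw [and_iff_right rfl]
      by_cases hc1 : j < m <;> by_cases hc2 : j' < m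
      · rw [if_pos hc1, if_pos hc2, hgg _ _ (by omega) (by omega)]; omega
      · rw [if_pos hc1, if_neg hc2, hcg' _ (by omega)]; omega
      · rw [if_neg hc1, if_pos hc2, hcg _ (by omega)]; omega
      · rw [if_neg hc1, if_neg hc2]; exact iff_of_false (G.irrefl) (by omega)
    · have h1 : j < m + 1 := hj
      have h2 : j' < (E - 1 - m) + r + 1 := hj'
      refine iff_of_false ?_ (by simp)
      show ¬ G.Adj (if j < m then g (m - 1 - j) else c)
        (if j' < E - 1 - m then g (m + 1 + j')
          else if j' < (E - 1 - m) + r then h (j' - (E - 1 - m)) else b)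
      by_cases hc1 : j < m
      · rw [if_pos hc1]
        by_cases hc2 : j' < E - 1 - m
        · rw [if_pos hc2, hgg _ _ (by omega) (by omega)]; omega
        · rw [if_neg hc2]
          by_cases hc3 : j' < (E - 1 - m) + r
          · rw [if_pos hc3, hgh _ _ (by omega) (by omega)]; omega
          · rw [if_neg hc3, hbg' _ (by omega)]; omega
      · rw [if_neg hc1]
        by_cases hc2 : j' < E - 1 - m
        · rw [if_pos hc2, hcg _ (by omega)]; omega
        · rw [if_neg hc2]
          by_cases hc3 : j' < (E - 1 - m) + r
          · rw [if_pos hc3]; exact hch _ (by omega)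
          · rw [if_neg hc3]; exact fun hh => hnbc hh.symm
    · have h1 : j < (E - 1 - m) + r + 1 := hj
      have h2 : j' < 1 := hj'
      refine iff_of_false ?_ (by simp)
      show ¬ G.Adj (if j < E - 1 - m then g (m + 1 + j)
          else if j < (E - 1 - m) + r then h (j - (E - 1 - m)) else b) a
      by_cases hc1 : j < E - 1 - m
      · rw [if_pos hc1, hag' _ (by omega)]; omega
      · rw [if_neg hc1]
        by_cases hc2 : j < (E - 1 - m) + r
        · rw [if_pos hc2]; exact fun hh => hah _ (by omega) hh.symm
        · rw [if_neg hc2]; exact fun hh => hnab hh.symm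
    · have h1 : j < (E - 1 - m) + r + 1 := hj
      have h2 : j' < m + 1 := hj'
      refine iff_of_false ?_ (by simp)
      show ¬ G.Adj (if j < E - 1 - m then g (m + 1 + j)
          else if j < (E - 1 - m) + r then h (j - (E - 1 - m)) else b)
        (if j' < m then g (m - 1 - j') else c)
      by_cases hc1 : j < E - 1 - m
      · rw [if_pos hc1]
        by_cases hc2 : j' < m
        · rw [if_pos hc2, hgg _ _ (by omega) (by omega)]; omega
        · rw [if_neg hc2, hcg' _ (by omega)]; omega
      · rw [if_neg hc1]
        by_cases hc3 : j < (E - 1 - m) + r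
        · rw [if_pos hc3]
          by_cases hc2 : j' < m
          · rw [if_pos hc2, hgh' _ _ (by omega) (by omega)]; omega
          · rw [if_neg hc2]; exact fun hh => hch _ (by omega) hh.symm
        · rw [if_neg hc3]
          by_cases hc2 : j' < m
          · rw [if_pos hc2, hbg _ (by omega)]; omega
          · rw [if_neg hc2]; exact hnbc
    · have h1 : j < (E - 1 - m) + r + 1 := hj
      have h2 : j' < (E - 1 - m) + r + 1 := hj'
      show G.Adj (if j < E - 1 - m then g (m + 1 + j)
          else if j < (E - 1 - m) + r then h (j - (E - 1 - m)) else b)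
        (if j' < E - 1 - m then g (m + 1 + j')
          else if j' < (E - 1 - m) + r then h (j' - (E - 1 - m)) else b)
        ↔ ((2 : Fin 3) = 2 ∧ _)
      rw [and_iff_right rfl]
      by_cases hc1 : j < E - 1 - m <;> by_cases hc2 : j' < E - 1 - m
      · rw [if_pos hc1, if_pos hc2, hgg _ _ (by omega) (by omega)]; omega
      · rw [if_pos hc1, if_neg hc2]
        by_cases hc3 : j' < (E - 1 - m) + r
        · rw [if_pos hc3, hgh _ _ (by omega) (by omega)]; omega
        · rw [if_neg hc3, hbg' _ (by omega)]; omega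
      · rw [if_neg hc1, if_pos hc2]
        by_cases hc3 : j < (E - 1 - m) + r
        · rw [if_pos hc3, hgh' _ _ (by omega) (by omega)]; omega
        · rw [if_neg hc3, hbg _ (by omega)]; omega
      · rw [if_neg hc1, if_neg hc2]
        by_cases hc3 : j < (E - 1 - m) + r <;> by_cases hc4 : j' < (E - 1 - m) + r
        · rw [if_pos hc3, if_pos hc4, hhh _ _ (by omega) (by omega)]; omega
        · rw [if_pos hc3, if_neg hc4, hbh' _ (by omega)]; omega
        · rw [if_neg hc3, if_pos hc4, hbh _ (by omega)]; omega
        · rw [if_neg hc3, if_neg hc4]; exact iff_of_false (G.irrefl) (by omega)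
  · -- injectivity
    intro i i' j j' hj hj'
    fin_cases i <;> fin_cases i'
    · have h1 : j < 1 := hj
      have h2 : j' < 1 := hj'
      intro _; exact ⟨rfl, by omega⟩
    · have h1 : j < 1 := hj
      have h2 : j' < m + 1 := hj'
      show a = (if j' < m then g (m - 1 - j') else c) → _
      intro heq; exfalso
      by_cases hc2 : j' < m
      · rw [if_pos hc2] at heq
        exact has (heq ▸ hgs _ (by omega))
      · rw [if_neg hc2] at heq
        exact hac heq
    · have h1 : j < 1 := hj
      have h2 : j' < (E - 1 - m) + r + 1 := hj'
      show a = (if j' < E - 1 - m then g (m + 1 + j')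
        else if j' < (E - 1 - m) + r then h (j' - (E - 1 - m)) else b) → _
      intro heq; exfalso
      by_cases hc1 : j' < E - 1 - m
      · rw [if_pos hc1] at heq
        exact has (heq ▸ hgs _ (by omega))
      · rw [if_neg hc1] at heq
        by_cases hc2 : j' < (E - 1 - m) + r
        · rw [if_pos hc2] at heq
          exact has (heq ▸ hhs _ (by omega))
        · rw [if_neg hc2] at heq
          exact hab heq
    · have h1 : j < m + 1 := hj
      have h2 : j' < 1 := hj'
      show (if j < m then g (m - 1 - j) else c) = a → _
      intro heq; exfalso
      by_cases hc1 : j < m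
      · rw [if_pos hc1] at heq
        exact has (heq ▸ hgs _ (by omega))
      · rw [if_neg hc1] at heq
        exact hac heq.symm
    · have h1 : j < m + 1 := hj
      have h2 : j' < m + 1 := hj'
      show (if j < m then g (m - 1 - j) else c) = (if j' < m then g (m - 1 - j') else c) → _
      intro heq
      refine ⟨rfl, ?_⟩
      by_cases hc1 : j < m <;> by_cases hc2 : j' < m
      · rw [if_pos hc1, if_pos hc2] at heq
        have := hginj _ _ (by omega) (by omega) heq; omega
      · rw [if_pos hc1, if_neg hc2] at heq
        exact absurd (hgs _ (by omega)) (heq ▸ hcs)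
      · rw [if_neg hc1, if_pos hc2] at heq
        exact absurd (hgs _ (by omega)) (heq.symm ▸ hcs)
      · omega
    · have h1 : j < m + 1 := hj
      have h2 : j' < (E - 1 - m) + r + 1 := hj'
      show (if j < m then g (m - 1 - j) else c) = (if j' < E - 1 - m then g (m + 1 + j')
        else if j' < (E - 1 - m) + r then h (j' - (E - 1 - m)) else b) → _
      intro heq; exfalso
      by_cases hc1 : j < m
      · rw [if_pos hc1] at heq
        by_cases hc2 : j' < E - 1 - m
        · rw [if_pos hc2] at heq
          have := hginj _ _ (by omega) (by omega) heq; omega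
        · rw [if_neg hc2] at heq
          by_cases hc3 : j' < (E - 1 - m) + r
          · rw [if_pos hc3] at heq
            exact hghne _ _ (by omega) (by omega) heq
          · rw [if_neg hc3] at heq
            exact hbs (heq ▸ hgs _ (by omega))
      · rw [if_neg hc1] at heq
        by_cases hc2 : j' < E - 1 - m
        · rw [if_pos hc2] at heq
          exact hcs (heq.symm ▸ hgs _ (by omega))
        · rw [if_neg hc2] at heq
          by_cases hc3 : j' < (E - 1 - m) + r
          · rw [if_pos hc3] at heq
            exact hcs (heq.symm ▸ hhs _ (by omega))
          · rw [if_neg hc3] at heq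
            exact hbc heq.symm
    · have h1 : j < (E - 1 - m) + r + 1 := hj
      have h2 : j' < 1 := hj'
      show (if j < E - 1 - m then g (m + 1 + j)
        else if j < (E - 1 - m) + r then h (j - (E - 1 - m)) else b) = a → _
      intro heq; exfalso
      by_cases hc1 : j < E - 1 - m
      · rw [if_pos hc1] at heq
        exact has (heq.symm ▸ hgs _ (by omega))
      · rw [if_neg hc1] at heq
        by_cases hc2 : j < (E - 1 - m) + r
        · rw [if_pos hc2] at heq
          exact has (heq.symm ▸ hhs _ (by omega))
        · rw [if_neg hc2] at heq
          exact hab heq.symm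
    · have h1 : j < (E - 1 - m) + r + 1 := hj
      have h2 : j' < m + 1 := hj'
      show (if j < E - 1 - m then g (m + 1 + j)
        else if j < (E - 1 - m) + r then h (j - (E - 1 - m)) else b)
        = (if j' < m then g (m - 1 - j') else c) → _
      intro heq; exfalso
      by_cases hc2 : j' < m
      · rw [if_pos hc2] at heq
        by_cases hc1 : j < E - 1 - m
        · rw [if_pos hc1] at heq
          have := hginj _ _ (by omega) (by omega) heq; omega
        · rw [if_neg hc1] at heq
          by_cases hc3 : j < (E - 1 - m) + r
          · rw [if_pos hc3] at heq
            exact hghne _ _ (by omega) (by omega) heq.symm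
          · rw [if_neg hc3] at heq
            exact hbs (heq.symm ▸ hgs _ (by omega))
      · rw [if_neg hc2] at heq
        by_cases hc1 : j < E - 1 - m
        · rw [if_pos hc1] at heq
          exact hcs (heq ▸ hgs _ (by omega))
        · rw [if_neg hc1] at heq
          by_cases hc3 : j < (E - 1 - m) + r
          · rw [if_pos hc3] at heq
            exact hcs (heq ▸ hhs _ (by omega))
          · rw [if_neg hc3] at heq
            exact hbc heq
    · have h1 : j < (E - 1 - m) + r + 1 := hj
      have h2 : j' < (E - 1 - m) + r + 1 := hj'
      show (if j < E - 1 - m then g (m + 1 + j)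
        else if j < (E - 1 - m) + r then h (j - (E - 1 - m)) else b)
        = (if j' < E - 1 - m then g (m + 1 + j')
          else if j' < (E - 1 - m) + r then h (j' - (E - 1 - m)) else b) → _
      intro heq
      refine ⟨rfl, ?_⟩
      by_cases hc1 : j < E - 1 - m <;> by_cases hc2 : j' < E - 1 - m
      · rw [if_pos hc1, if_pos hc2] at heq
        have := hginj _ _ (by omega) (by omega) heq; omega
      · rw [if_pos hc1, if_neg hc2] at heq
        by_cases hc3 : j' < (E - 1 - m) + r
        · rw [if_pos hc3] at heq
          exact absurd heq (hghne _ _ (by omega) (by omega))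
        · rw [if_neg hc3] at heq
          exact absurd (hgs _ (by omega)) (heq ▸ hbs)
      · rw [if_neg hc1, if_pos hc2] at heq
        by_cases hc3 : j < (E - 1 - m) + r
        · rw [if_pos hc3] at heq
          exact absurd heq.symm (hghne _ _ (by omega) (by omega))
        · rw [if_neg hc3] at heq
          exact absurd (hgs _ (by omega)) (heq.symm ▸ hbs)
      · rw [if_neg hc1, if_neg hc2] at heq
        by_cases hc3 : j < (E - 1 - m) + r <;> by_cases hc4 : j' < (E - 1 - m) + r
        · rw [if_pos hc3, if_pos hc4] at heq
          have := hhinj _ _ (by omega) (by omega) heq; omega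
        · rw [if_pos hc3, if_neg hc4] at heq
          exact absurd (hhs _ (by omega)) (heq ▸ hbs)
        · rw [if_neg hc3, if_pos hc4] at heq
          exact absurd (hhs _ (by omega)) (heq.symm ▸ hbs)
        · omega
  · -- arm ≠ center
    intro i j hj
    fin_cases i
    · show a ≠ g m
      intro heq
      exact has (heq ▸ hgs m hm)
    · have h1 : j < m + 1 := hj
      show (if j < m then g (m - 1 - j) else c) ≠ g m
      by_cases hc1 : j < m
      · rw [if_pos hc1]
        intro heq
        have := hginj _ _ (by omega) hm heq; omega
      · rw [if_neg hc1]
        intro heq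
        exact hcs (heq ▸ hgs m hm)
    · have h1 : j < (E - 1 - m) + r + 1 := hj
      show (if j < E - 1 - m then g (m + 1 + j)
        else if j < (E - 1 - m) + r then h (j - (E - 1 - m)) else b) ≠ g m
      by_cases hc1 : j < E - 1 - m
      · rw [if_pos hc1]
        intro heq
        have := hginj _ _ (by omega) hm heq; omega
      · rw [if_neg hc1]
        by_cases hc2 : j < (E - 1 - m) + r
        · rw [if_pos hc2]
          exact fun heq => hghne _ _ hm (by omega) heq.symm
        · rw [if_neg hc2]
          intro heq
          exact hbs (heq ▸ hgs m hm)
  · -- tips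
    have e1 : (if m + 1 - 1 < m then g (m - 1 - (m + 1 - 1)) else c) = c := by
      rw [if_neg (by omega)]
    have e2 : (if (E - 1 - m) + r + 1 - 1 < E - 1 - m then g (m + 1 + ((E - 1 - m) + r + 1 - 1))
        else if (E - 1 - m) + r + 1 - 1 < (E - 1 - m) + r
          then h ((E - 1 - m) + r + 1 - 1 - (E - 1 - m)) else b) = b := by
      rw [if_neg (by omega), if_neg (by omega)]
    show (I : Set V) = {a,
      (if m + 1 - 1 < m then g (m - 1 - (m + 1 - 1)) else c),
      (if (E - 1 - m) + r + 1 - 1 < E - 1 - m then g (m + 1 + ((E - 1 - m) + r + 1 - 1))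
        else if (E - 1 - m) + r + 1 - 1 < (E - 1 - m) + r
          then h ((E - 1 - m) + r + 1 - 1 - (E - 1 - m)) else b)}
    rw [e1, e2, hI]

theorem caseT {V : Type} (G : SimpleGraph V) (I : Finset V) (s : Set V) (a b c : V)
    (f : ℕ → V) (k : ℕ) (g : ℕ → V) (l : ℕ) (hl : 0 < l)
    (i0 : ℕ) (hi0 : i0 + 1 < k)
    (hfs : ∀ i, i < k → f i ∈ s)
    (hff : ∀ i j, i < k → j < k → (G.Adj (f i) (f j) ↔ (j = i + 1 ∨ i = j + 1)))
    (hfinj : ∀ i j, i < k → j < k → f i = f j → i = j)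
    (hfa : ∀ i, i < k → (G.Adj a (f i) ↔ i = 0))
    (hfb : ∀ i, i < k → (G.Adj b (f i) ↔ i = k - 1))
    (hgs : ∀ i, i < l → g i ∈ s)
    (hgg : ∀ i j, i < l → j < l → (G.Adj (g i) (g j) ↔ (j = i + 1 ∨ i = j + 1)))
    (hginj : ∀ i j, i < l → j < l → g i = g j → i = j)
    (hgf : ∀ i m, i < l → m < k → g i ≠ f m)
    (hgfadj : ∀ i m, i < l → m < k →
      (G.Adj (g i) (f m) ↔ (i = l - 1 ∧ (m = i0 ∨ m = i0 + 1))))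
    (hcf : ∀ m, m < k → ¬ G.Adj c (f m))
    (hcg : ∀ i, i < l → (G.Adj c (g i) ↔ i = 0))
    (hag : ∀ i, i < l → ¬ G.Adj a (g i)) (hbg : ∀ i, i < l → ¬ G.Adj b (g i))
    (has : a ∉ s) (hbs : b ∉ s) (hcs : c ∉ s)
    (hab : a ≠ b) (hac : a ≠ c) (hbc : b ≠ c)
    (hnab : ¬ G.Adj a b) (hnac : ¬ G.Adj a c) (hnbc : ¬ G.Adj b c)
    (hI : (I : Set V) = {a, b, c}) :
    (∃ n : Fin 3 → ℕ, (∀ i, 1 ≤ n i) ∧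
      ∃ e : spiderT n ↪g G,
        (∀ x, e x ∈ s ∪ {v : V | ∃ x ∈ s, G.Adj v x}) ∧
        (fun x => e x) '' {x : Σ i : Fin 3, Fin (n i + 1) | (x.2 : ℕ) = n x.1} = ↑I) := by
  have hfa' : ∀ i, i < k → (G.Adj (f i) a ↔ i = 0) := by
    intro i hi; rw [G.adj_comm]; exact hfa i hi
  have hfb' : ∀ i, i < k → (G.Adj (f i) b ↔ i = k - 1) := by
    intro i hi; rw [G.adj_comm]; exact hfb i hi
  have hcf' : ∀ m, m < k → ¬ G.Adj (f m) c := by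
    intro m hm hh; exact hcf m hm hh.symm
  have hcg' : ∀ i, i < l → (G.Adj (g i) c ↔ i = 0) := by
    intro i hi; rw [G.adj_comm]; exact hcg i hi
  have hfg : ∀ m i, m < k → i < l →
      (G.Adj (f m) (g i) ↔ (i = l - 1 ∧ (m = i0 ∨ m = i0 + 1))) := by
    intro m i hm hi; rw [G.adj_comm]; exact hgfadj i m hi hm
  have hag' : ∀ i, i < l → ¬ G.Adj (g i) a := by
    intro i hi hh; exact hag i hi hh.symm
  have hbg' : ∀ i, i < l → ¬ G.Adj (g i) b := by
    intro i hi hh; exact hbg i hi hh.symm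
  have hRs : ∀ (x : Fin 3) (j j' : ℕ) (Q : Prop),
      (((j = 0 ∧ j' = 0 ∧ x ≠ x) ∨ (x = x ∧ Q)) ↔ Q) := by
    intro x j j' Q
    constructor
    · rintro (⟨-, -, hx⟩ | ⟨-, hq⟩)
      · exact absurd rfl hx
      · exact hq
    · intro hq; exact Or.inr ⟨rfl, hq⟩
  have hRd : ∀ (x y : Fin 3), x ≠ y → ∀ (j j' : ℕ) (Q : Prop),
      (((j = 0 ∧ j' = 0 ∧ x ≠ y) ∨ (x = y ∧ Q)) ↔ (j = 0 ∧ j' = 0)) := by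
    intro x y hxy j j' Q
    constructor
    · rintro (⟨h1, h2, -⟩ | ⟨he, -⟩)
      · exact ⟨h1, h2⟩
      · exact absurd he hxy
    · rintro ⟨h1, h2⟩; exact Or.inl ⟨h1, h2, hxy⟩
  refine buildT G I s
    (fun i => if i = 0 then i0 + 1 else if i = 1 then k - i0 - 1 else l)
    (by
      intro i; fin_cases i
      · show 1 ≤ i0 + 1; omega
      · show 1 ≤ k - i0 - 1; omega
      · show 1 ≤ l; omega)
    (fun i j => if i = 0 then (if j ≤ i0 then f (i0 - j) else a)
      else if i = 1 then (if j + i0 + 1 < k then f (i0 + 1 + j) else b)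
      else (if j < l then g (l - 1 - j) else c))
    ?_ ?_ ?_ ?_
  · -- membership
    intro i j hj
    fin_cases i
    · have h1 : j ≤ i0 + 1 := hj
      show (if j ≤ i0 then f (i0 - j) else a) ∈ _
      by_cases hc1 : j ≤ i0
      · rw [if_pos hc1]; exact Or.inl (hfs _ (by omega))
      · rw [if_neg hc1]; exact Or.inr ⟨f 0, hfs 0 (by omega), (hfa 0 (by omega)).2 rfl⟩
    · have h1 : j ≤ k - i0 - 1 := hj
      show (if j + i0 + 1 < k then f (i0 + 1 + j) else b) ∈ _
      by_cases hc1 : j + i0 + 1 < k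
      · rw [if_pos hc1]; exact Or.inl (hfs _ (by omega))
      · rw [if_neg hc1]
        exact Or.inr ⟨f (k - 1), hfs _ (by omega), (hfb _ (by omega)).2 rfl⟩
    · have h1 : j ≤ l := hj
      show (if j < l then g (l - 1 - j) else c) ∈ _
      by_cases hc1 : j < l
      · rw [if_pos hc1]; exact Or.inl (hgs _ (by omega))
      · rw [if_neg hc1]; exact Or.inr ⟨g 0, hgs 0 hl, (hcg 0 hl).2 rfl⟩
  · -- adjacency
    intro i i' j j' hj hj'
    fin_cases i <;> fin_cases i'
    · have h1 : j ≤ i0 + 1 := hj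
      have h2 : j' ≤ i0 + 1 := hj'
      show G.Adj (if j ≤ i0 then f (i0 - j) else a) (if j' ≤ i0 then f (i0 - j') else a) ↔ _
      rw [hRs]
      by_cases hc1 : j ≤ i0 <;> by_cases hc2 : j' ≤ i0
      · rw [if_pos hc1, if_pos hc2, hff _ _ (by omega) (by omega)]; omega
      · rw [if_pos hc1, if_neg hc2, hfa' _ (by omega)]; omega
      · rw [if_neg hc1, if_pos hc2, hfa _ (by omega)]; omega
      · rw [if_neg hc1, if_neg hc2]; exact iff_of_false (G.irrefl) (by omega)
    · have h1 : j ≤ i0 + 1 := hj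
      have h2 : j' ≤ k - i0 - 1 := hj'
      show G.Adj (if j ≤ i0 then f (i0 - j) else a)
        (if j' + i0 + 1 < k then f (i0 + 1 + j') else b) ↔ _
      rw [hRd _ _ (by decide)]
      by_cases hc1 : j ≤ i0 <;> by_cases hc2 : j' + i0 + 1 < k
      · rw [if_pos hc1, if_pos hc2, hff _ _ (by omega) (by omega)]; omega
      · rw [if_pos hc1, if_neg hc2, hfb' _ (by omega)]; omega
      · rw [if_neg hc1, if_pos hc2, hfa _ (by omega)]; omega
      · rw [if_neg hc1, if_neg hc2]; exact iff_of_false hnab (by omega)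
    · have h1 : j ≤ i0 + 1 := hj
      have h2 : j' ≤ l := hj'
      show G.Adj (if j ≤ i0 then f (i0 - j) else a) (if j' < l then g (l - 1 - j') else c) ↔ _
      rw [hRd _ _ (by decide)]
      by_cases hc1 : j ≤ i0 <;> by_cases hc2 : j' < l
      · rw [if_pos hc1, if_pos hc2, hfg _ _ (by omega) (by omega)]; omega
      · rw [if_pos hc1, if_neg hc2]; exact iff_of_false (hcf' _ (by omega)) (by omega)
      · rw [if_neg hc1, if_pos hc2]; exact iff_of_false (hag _ (by omega)) (by omega)
      · rw [if_neg hc1, if_neg hc2]; exact iff_of_false hnac (by omega)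
    · have h1 : j ≤ k - i0 - 1 := hj
      have h2 : j' ≤ i0 + 1 := hj'
      show G.Adj (if j + i0 + 1 < k then f (i0 + 1 + j) else b)
        (if j' ≤ i0 then f (i0 - j') else a) ↔ _
      rw [hRd _ _ (by decide)]
      by_cases hc1 : j + i0 + 1 < k <;> by_cases hc2 : j' ≤ i0
      · rw [if_pos hc1, if_pos hc2, hff _ _ (by omega) (by omega)]; omega
      · rw [if_pos hc1, if_neg hc2, hfa' _ (by omega)]; omega
      · rw [if_neg hc1, if_pos hc2, hfb _ (by omega)]; omega
      · rw [if_neg hc1, if_neg hc2]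
        exact iff_of_false (fun hh => hnab hh.symm) (by omega)
    · have h1 : j ≤ k - i0 - 1 := hj
      have h2 : j' ≤ k - i0 - 1 := hj'
      show G.Adj (if j + i0 + 1 < k then f (i0 + 1 + j) else b)
        (if j' + i0 + 1 < k then f (i0 + 1 + j') else b) ↔ _
      rw [hRs]
      by_cases hc1 : j + i0 + 1 < k <;> by_cases hc2 : j' + i0 + 1 < k
      · rw [if_pos hc1, if_pos hc2, hff _ _ (by omega) (by omega)]; omega
      · rw [if_pos hc1, if_neg hc2, hfb' _ (by omega)]; omega
      · rw [if_neg hc1, if_pos hc2, hfb _ (by omega)]; omega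
      · rw [if_neg hc1, if_neg hc2]; exact iff_of_false (G.irrefl) (by omega)
    · have h1 : j ≤ k - i0 - 1 := hj
      have h2 : j' ≤ l := hj'
      show G.Adj (if j + i0 + 1 < k then f (i0 + 1 + j) else b)
        (if j' < l then g (l - 1 - j') else c) ↔ _
      rw [hRd _ _ (by decide)]
      by_cases hc1 : j + i0 + 1 < k <;> by_cases hc2 : j' < l
      · rw [if_pos hc1, if_pos hc2, hfg _ _ (by omega) (by omega)]; omega
      · rw [if_pos hc1, if_neg hc2]; exact iff_of_false (hcf' _ (by omega)) (by omega)
      · rw [if_neg hc1, if_pos hc2]; exact iff_of_false (hbg _ (by omega)) (by omega)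
      · rw [if_neg hc1, if_neg hc2]; exact iff_of_false hnbc (by omega)
    · have h1 : j ≤ l := hj
      have h2 : j' ≤ i0 + 1 := hj'
      show G.Adj (if j < l then g (l - 1 - j) else c) (if j' ≤ i0 then f (i0 - j') else a) ↔ _
      rw [hRd _ _ (by decide)]
      by_cases hc1 : j < l <;> by_cases hc2 : j' ≤ i0
      · rw [if_pos hc1, if_pos hc2, hgfadj _ _ (by omega) (by omega)]; omega
      · rw [if_pos hc1, if_neg hc2]; exact iff_of_false (hag' _ (by omega)) (by omega)
      · rw [if_neg hc1, if_pos hc2]; exact iff_of_false (hcf _ (by omega)) (by omega)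
      · rw [if_neg hc1, if_neg hc2]
        exact iff_of_false (fun hh => hnac hh.symm) (by omega)
    · have h1 : j ≤ l := hj
      have h2 : j' ≤ k - i0 - 1 := hj'
      show G.Adj (if j < l then g (l - 1 - j) else c)
        (if j' + i0 + 1 < k then f (i0 + 1 + j') else b) ↔ _
      rw [hRd _ _ (by decide)]
      by_cases hc1 : j < l <;> by_cases hc2 : j' + i0 + 1 < k
      · rw [if_pos hc1, if_pos hc2, hgfadj _ _ (by omega) (by omega)]; omega
      · rw [if_pos hc1, if_neg hc2]; exact iff_of_false (hbg' _ (by omega)) (by omega)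
      · rw [if_neg hc1, if_pos hc2]; exact iff_of_false (hcf _ (by omega)) (by omega)
      · rw [if_neg hc1, if_neg hc2]
        exact iff_of_false (fun hh => hnbc hh.symm) (by omega)
    · have h1 : j ≤ l := hj
      have h2 : j' ≤ l := hj'
      show G.Adj (if j < l then g (l - 1 - j) else c) (if j' < l then g (l - 1 - j') else c) ↔ _
      rw [hRs]
      by_cases hc1 : j < l <;> by_cases hc2 : j' < l
      · rw [if_pos hc1, if_pos hc2, hgg _ _ (by omega) (by omega)]; omega
      · rw [if_pos hc1, if_neg hc2, hcg' _ (by omega)]; omega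
      · rw [if_neg hc1, if_pos hc2, hcg _ (by omega)]; omega
      · rw [if_neg hc1, if_neg hc2]; exact iff_of_false (G.irrefl) (by omega)
  · -- injectivity
    intro i i' j j' hj hj'
    fin_cases i <;> fin_cases i'
    · have h1 : j ≤ i0 + 1 := hj
      have h2 : j' ≤ i0 + 1 := hj'
      show (if j ≤ i0 then f (i0 - j) else a) = (if j' ≤ i0 then f (i0 - j') else a) → _
      intro heq
      refine ⟨rfl, ?_⟩
      by_cases hc1 : j ≤ i0 <;> by_cases hc2 : j' ≤ i0
      · rw [if_pos hc1, if_pos hc2] at heq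
        have := hfinj _ _ (by omega) (by omega) heq; omega
      · rw [if_pos hc1, if_neg hc2] at heq
        exact absurd (hfs _ (by omega)) (heq ▸ has)
      · rw [if_neg hc1, if_pos hc2] at heq
        exact absurd (hfs _ (by omega)) (heq.symm ▸ has)
      · omega
    · have h1 : j ≤ i0 + 1 := hj
      have h2 : j' ≤ k - i0 - 1 := hj'
      show (if j ≤ i0 then f (i0 - j) else a)
        = (if j' + i0 + 1 < k then f (i0 + 1 + j') else b) → _
      intro heq; exfalso
      by_cases hc1 : j ≤ i0 <;> by_cases hc2 : j' + i0 + 1 < k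
      · rw [if_pos hc1, if_pos hc2] at heq
        have := hfinj _ _ (by omega) (by omega) heq; omega
      · rw [if_pos hc1, if_neg hc2] at heq
        exact absurd (hfs _ (by omega)) (heq ▸ hbs)
      · rw [if_neg hc1, if_pos hc2] at heq
        exact absurd (hfs _ (by omega)) (heq.symm ▸ has)
      · rw [if_neg hc1, if_neg hc2] at heq
        exact hab heq
    · have h1 : j ≤ i0 + 1 := hj
      have h2 : j' ≤ l := hj'
      show (if j ≤ i0 then f (i0 - j) else a) = (if j' < l then g (l - 1 - j') else c) → _
      intro heq; exfalso
      by_cases hc1 : j ≤ i0 <;> by_cases hc2 : j' < l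
      · rw [if_pos hc1, if_pos hc2] at heq
        exact hgf _ _ (by omega) (by omega) heq.symm
      · rw [if_pos hc1, if_neg hc2] at heq
        exact absurd (hfs _ (by omega)) (heq ▸ hcs)
      · rw [if_neg hc1, if_pos hc2] at heq
        exact absurd (hgs _ (by omega)) (heq.symm ▸ has)
      · rw [if_neg hc1, if_neg hc2] at heq
        exact hac heq
    · have h1 : j ≤ k - i0 - 1 := hj
      have h2 : j' ≤ i0 + 1 := hj'
      show (if j + i0 + 1 < k then f (i0 + 1 + j) else b)
        = (if j' ≤ i0 then f (i0 - j') else a) → _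
      intro heq; exfalso
      by_cases hc1 : j + i0 + 1 < k <;> by_cases hc2 : j' ≤ i0
      · rw [if_pos hc1, if_pos hc2] at heq
        have := hfinj _ _ (by omega) (by omega) heq; omega
      · rw [if_pos hc1, if_neg hc2] at heq
        exact absurd (hfs _ (by omega)) (heq ▸ has)
      · rw [if_neg hc1, if_pos hc2] at heq
        exact absurd (hfs _ (by omega)) (heq.symm ▸ hbs)
      · rw [if_neg hc1, if_neg hc2] at heq
        exact hab heq.symm
    · have h1 : j ≤ k - i0 - 1 := hj
      have h2 : j' ≤ k - i0 - 1 := hj'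
      show (if j + i0 + 1 < k then f (i0 + 1 + j) else b)
        = (if j' + i0 + 1 < k then f (i0 + 1 + j') else b) → _
      intro heq
      refine ⟨rfl, ?_⟩
      by_cases hc1 : j + i0 + 1 < k <;> by_cases hc2 : j' + i0 + 1 < k
      · rw [if_pos hc1, if_pos hc2] at heq
        have := hfinj _ _ (by omega) (by omega) heq; omega
      · rw [if_pos hc1, if_neg hc2] at heq
        exact absurd (hfs _ (by omega)) (heq ▸ hbs)
      · rw [if_neg hc1, if_pos hc2] at heq
        exact absurd (hfs _ (by omega)) (heq.symm ▸ hbs)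
      · omega
    · have h1 : j ≤ k - i0 - 1 := hj
      have h2 : j' ≤ l := hj'
      show (if j + i0 + 1 < k then f (i0 + 1 + j) else b)
        = (if j' < l then g (l - 1 - j') else c) → _
      intro heq; exfalso
      by_cases hc1 : j + i0 + 1 < k <;> by_cases hc2 : j' < l
      · rw [if_pos hc1, if_pos hc2] at heq
        exact hgf _ _ (by omega) (by omega) heq.symm
      · rw [if_pos hc1, if_neg hc2] at heq
        exact absurd (hfs _ (by omega)) (heq ▸ hcs)
      · rw [if_neg hc1, if_pos hc2] at heq
        exact absurd (hgs _ (by omega)) (heq.symm ▸ hbs)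
      · rw [if_neg hc1, if_neg hc2] at heq
        exact hbc heq
    · have h1 : j ≤ l := hj
      have h2 : j' ≤ i0 + 1 := hj'
      show (if j < l then g (l - 1 - j) else c) = (if j' ≤ i0 then f (i0 - j') else a) → _
      intro heq; exfalso
      by_cases hc1 : j < l <;> by_cases hc2 : j' ≤ i0
      · rw [if_pos hc1, if_pos hc2] at heq
        exact hgf _ _ (by omega) (by omega) heq
      · rw [if_pos hc1, if_neg hc2] at heq
        exact absurd (hgs _ (by omega)) (heq ▸ has)
      · rw [if_neg hc1, if_pos hc2] at heq
        exact absurd (hfs _ (by omega)) (heq.symm ▸ hcs)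
      · rw [if_neg hc1, if_neg hc2] at heq
        exact hac heq.symm
    · have h1 : j ≤ l := hj
      have h2 : j' ≤ k - i0 - 1 := hj'
      show (if j < l then g (l - 1 - j) else c)
        = (if j' + i0 + 1 < k then f (i0 + 1 + j') else b) → _
      intro heq; exfalso
      by_cases hc1 : j < l <;> by_cases hc2 : j' + i0 + 1 < k
      · rw [if_pos hc1, if_pos hc2] at heq
        exact hgf _ _ (by omega) (by omega) heq
      · rw [if_pos hc1, if_neg hc2] at heq
        exact absurd (hgs _ (by omega)) (heq ▸ hbs)
      · rw [if_neg hc1, if_pos hc2] at heq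
        exact absurd (hfs _ (by omega)) (heq.symm ▸ hcs)
      · rw [if_neg hc1, if_neg hc2] at heq
        exact hbc heq.symm
    · have h1 : j ≤ l := hj
      have h2 : j' ≤ l := hj'
      show (if j < l then g (l - 1 - j) else c) = (if j' < l then g (l - 1 - j') else c) → _
      intro heq
      refine ⟨rfl, ?_⟩
      by_cases hc1 : j < l <;> by_cases hc2 : j' < l
      · rw [if_pos hc1, if_pos hc2] at heq
        have := hginj _ _ (by omega) (by omega) heq; omega
      · rw [if_pos hc1, if_neg hc2] at heq
        exact absurd (hgs _ (by omega)) (heq ▸ hcs)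
      · rw [if_neg hc1, if_pos hc2] at heq
        exact absurd (hgs _ (by omega)) (heq.symm ▸ hcs)
      · omega
  · -- tips
    have e0 : (if i0 + 1 ≤ i0 then f (i0 - (i0 + 1)) else a) = a := by rw [if_neg (by omega)]
    have e1 : (if (k - i0 - 1) + i0 + 1 < k then f (i0 + 1 + (k - i0 - 1)) else b) = b := by
      rw [if_neg (by omega)]
    have e2 : (if l < l then g (l - 1 - l) else c) = c := by rw [if_neg (by omega)]
    show (I : Set V) = {(if i0 + 1 ≤ i0 then f (i0 - (i0 + 1)) else a),
      (if (k - i0 - 1) + i0 + 1 < k then f (i0 + 1 + (k - i0 - 1)) else b),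
      (if l < l then g (l - 1 - l) else c)}
    rw [e0, e1, e2, hI]

lemma P_iffs {V : Type} {G : SimpleGraph V} {s : Set V} {a b : V} {f : ℕ → V} {k : ℕ}
    (hf : Pcand G s a b f k) (hmin : ∀ k' f', k' < k → ¬ Pcand G s a b f' k') :
    (∀ i j, i < k → j < k → (G.Adj (f i) (f j) ↔ (j = i + 1 ∨ i = j + 1))) ∧
    (∀ i j, i < k → j < k → f i = f j → i = j) ∧
    (∀ i, i < k → (G.Adj a (f i) ↔ i = 0)) ∧
    (∀ i, i < k → (G.Adj b (f i) ↔ i = k - 1)) := by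
  refine ⟨?_, ?_, ?_, ?_⟩
  · intro i j hi hj
    constructor
    · intro hadj
      rcases lt_trichotomy i j with h | h | h
      · left
        by_contra hne
        exact P_L1 hf hmin i j (by omega) hj hadj
      · subst h; exact absurd hadj (G.irrefl)
      · right
        by_contra hne
        exact P_L1 hf hmin j i (by omega) hi hadj.symm
    · rintro (h | h)
      · subst h; exact hf.2.2.1 i (by omega)
      · subst h; exact (hf.2.2.1 j (by omega)).symm
  · intro i j hi hj heq
    rcases lt_trichotomy i j with h | h | h
    · exact absurd heq (P_L2 hf hmin i j h hj)
    · exact h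
    · exact absurd heq.symm (P_L2 hf hmin j i h hi)
  · intro i hi
    constructor
    · exact P_L3 hf hmin i hi
    · rintro rfl; exact hf.2.2.2.1
  · intro i hi
    constructor
    · exact P_L4 hf hmin i hi
    · rintro rfl; exact hf.2.2.2.2

lemma Q_iffs {V : Type} {G : SimpleGraph V} {s : Set V} {a b c : V} {f : ℕ → V} {k : ℕ}
    {g : ℕ → V} {l : ℕ}
    (hf : Pcand G s a b f k) (hg : Qcand G s c f k g l)
    (hlmin : ∀ l' f' g', l' < l → ¬ (Pcand G s a b f' k ∧ Qcand G s c f' k g' l')) :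
    (∀ i j, i < l → j < l → (G.Adj (g i) (g j) ↔ (j = i + 1 ∨ i = j + 1))) ∧
    (∀ i j, i < l → j < l → g i = g j → i = j) ∧
    (∀ i, i < l → (G.Adj c (g i) ↔ i = 0)) := by
  refine ⟨?_, ?_, ?_⟩
  · intro i j hi hj
    constructor
    · intro hadj
      rcases lt_trichotomy i j with h | h | h
      · left
        by_contra hne
        exact Q_L1 hf hg hlmin i j (by omega) hj hadj
      · subst h; exact absurd hadj (G.irrefl)
      · right
        by_contra hne
        exact Q_L1 hf hg hlmin j i (by omega) hi hadj.symm
    · rintro (h | h)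
      · subst h; exact hg.2.2.1 i (by omega)
      · subst h; exact (hg.2.2.1 j (by omega)).symm
  · intro i j hi hj heq
    rcases lt_trichotomy i j with h | h | h
    · exact absurd heq (Q_L2 hf hg hlmin i j h hj)
    · exact h
    · exact absurd heq.symm (Q_L2 hf hg hlmin j i h hi)
  · intro i hi
    constructor
    · exact Q_L3 hf hg hlmin i hi
    · rintro rfl; exact hg.2.2.2.1

lemma caseAouter {V : Type} (G : SimpleGraph V) (I : Finset V) (s : Set V) (a b c : V)
    (f : ℕ → V) (k : ℕ)
    (hf : Pcand G s a b f k)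
    (hkmin : ∀ k' f', k' < k → ¬ Pcand G s a b f' k')
    (m1 : ℕ) (hm1 : m1 < k) (hcm1 : G.Adj c (f m1))
    (has : a ∉ s) (hbs : b ∉ s) (hcs : c ∉ s)
    (hab : a ≠ b) (hac : a ≠ c) (hbc : b ≠ c)
    (hnab : ¬ G.Adj a b) (hnac : ¬ G.Adj a c) (hnbc : ¬ G.Adj b c)
    (hI : (I : Set V) = {a, b, c}) : Concl G I s := by
  classical
  have hk : 0 < k := hf.1
  have hfs : ∀ i, i < k → f i ∈ s := hf.2.1
  obtain ⟨hff, hfinj, hfa, hfb⟩ := P_iffs hf hkmin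
  by_cases huniq : ∀ m, m < k → G.Adj c (f m) → m = m1
  · -- unique neighbour : spider with short third leg
    have hcf : ∀ m, m < k → (G.Adj c (f m) ↔ (0 = 0 ∧ m = m1)) := by
      intro m hm
      constructor
      · intro h; exact ⟨rfl, huniq m hm h⟩
      · rintro ⟨-, rfl⟩; exact hcm1
    refine Or.inl (caseS1 G I s a b c f k hk m1 hm1 (fun _ => a) 0 hfs hff hfinj hfa hfb
      (fun i hi => absurd hi (by omega)) (fun i j hi => absurd hi (by omega))
      (fun i j hi => absurd hi (by omega)) (fun i m hi => absurd hi (by omega))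
      (fun i m hi => absurd hi (by omega)) hcf (fun i hi => absurd hi (by omega))
      (fun i hi => absurd hi (by omega)) (fun i hi => absurd hi (by omega))
      has hbs hcs hab hac hbc hnab hnac hnbc hI)
  · push_neg at huniq
    obtain ⟨m2, hm2, hcm2, hm12⟩ := huniq
    exact caseM1 G I s a b c f k hk hfs hff hfinj hfa hfb has hbs hcs hab hac hbc
      hnab hnac hnbc m1 m2 hm1 hm2 (fun h => hm12 h.symm) hcm1 hcm2 hI

lemma caseB12outer {V : Type} (G : SimpleGraph V) (I : Finset V) (s : Set V) (a b c : V)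
    (f : ℕ → V) (k : ℕ) (g : ℕ → V) (l : ℕ)
    (hf : Pcand G s a b f k)
    (hkmin : ∀ k' f', k' < k → ¬ Pcand G s a b f' k')
    (hB : ∀ f', Pcand G s a b f' k → ∀ m, m < k → ¬ G.Adj c (f' m))
    (hg : Qcand G s c f k g l)
    (hlmin : ∀ l' f' g', l' < l → ¬ (Pcand G s a b f' k ∧ Qcand G s c f' k g' l'))
    (hnα : ∀ i, i < l → ¬ G.Adj a (g i)) (hnβ : ∀ i, i < l → ¬ G.Adj b (g i))
    (has : a ∉ s) (hbs : b ∉ s) (hcs : c ∉ s)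
    (hab : a ≠ b) (hac : a ≠ c) (hbc : b ≠ c)
    (hnab : ¬ G.Adj a b) (hnac : ¬ G.Adj a c) (hnbc : ¬ G.Adj b c)
    (hI : (I : Set V) = {a, b, c}) : Concl G I s := by
  classical
  have hk : 0 < k := hf.1
  have hl : 0 < l := hg.1
  have hfs : ∀ i, i < k → f i ∈ s := hf.2.1
  have hgs : ∀ i, i < l → g i ∈ s := hg.2.1
  have hgf : ∀ i m, i < l → m < k → g i ≠ f m := hg.2.2.2.2.1
  obtain ⟨hff, hfinj, hfa, hfb⟩ := P_iffs hf hkmin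
  obtain ⟨hgg, hginj, hcg⟩ := Q_iffs hf hg hlmin
  have hQ4 := Q_L4 hf hg hlmin
  have htex : ∃ m, m < k ∧ G.Adj (g (l - 1)) (f m) := hg.2.2.2.2.2
  set j0 := Nat.find htex with hj0def
  obtain ⟨hj0k, hj0adj⟩ := Nat.find_spec htex
  have htJ : ∀ m, m < k → G.Adj (g (l - 1)) (f m) → m = j0 ∨ m = j0 + 1 := by
    intro m hm hadj
    have hge : j0 ≤ m := by
      by_contra hlt
      exact Nat.find_min htex (by omega) ⟨hm, hadj⟩
    rcases Nat.eq_or_lt_of_le hge with h | h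
    · exact Or.inl h.symm
    · exact Or.inr (Q_L5 hf hg hlmin hkmin hB j0 m hm hj0adj hadj h)
  by_cases h2nd : j0 + 1 < k ∧ G.Adj (g (l - 1)) (f (j0 + 1))
  · -- triangle case
    have hgfadj : ∀ i m, i < l → m < k →
        (G.Adj (g i) (f m) ↔ (i = l - 1 ∧ (m = j0 ∨ m = j0 + 1))) := by
      intro i m hi hm
      constructor
      · intro hadj
        rcases Nat.lt_or_ge i (l - 1) with h | h
        · exact absurd hadj (hQ4 i (by omega) m hm)
        · have : i = l - 1 := by omega
          subst this
          exact ⟨rfl, htJ m hm hadj⟩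
      · rintro ⟨rfl, (rfl | rfl)⟩
        · exact hj0adj
        · exact h2nd.2
    exact Or.inr (Or.inl (caseT G I s a b c f k g l hl j0 h2nd.1 hfs hff hfinj hfa hfb
      hgs hgg hginj hgf hgfadj (fun m hm => hB f hf m hm) hcg hnα hnβ
      has hbs hcs hab hac hbc hnab hnac hnbc hI))
  · -- spider case
    have hgfadj : ∀ i m, i < l → m < k → (G.Adj (g i) (f m) ↔ (i = l - 1 ∧ m = j0)) := by
      intro i m hi hm
      constructor
      · intro hadj
        rcases Nat.lt_or_ge i (l - 1) with h | h
        · exact absurd hadj (hQ4 i (by omega) m hm)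
        · have hieq : i = l - 1 := by omega
          subst hieq
          rcases htJ m hm hadj with h | h
          · exact ⟨rfl, h⟩
          · exfalso
            subst h
            exact h2nd ⟨hm, hadj⟩
      · rintro ⟨rfl, rfl⟩
        exact hj0adj
    have hcf : ∀ m, m < k → (G.Adj c (f m) ↔ (l = 0 ∧ m = j0)) :=
      fun m hm => iff_of_false (hB f hf m hm) (by omega)
    exact Or.inl (caseS1 G I s a b c f k hk j0 hj0k g l hfs hff hfinj hfa hfb
      hgs hgg hginj hgf hgfadj hcf hcg hnα hnβ has hbs hcs hab hac hbc hnab hnac hnbc hI)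

lemma caseB3half {V : Type} (G : SimpleGraph V) (I : Finset V) (s : Set V) (a b c : V)
    (g : ℕ → V) (l : ℕ) (hl : 0 < l)
    (hgs : ∀ i, i < l → g i ∈ s)
    (hgg : ∀ i j, i < l → j < l → (G.Adj (g i) (g j) ↔ (j = i + 1 ∨ i = j + 1)))
    (hginj : ∀ i j, i < l → j < l → g i = g j → i = j)
    (hcg : ∀ i, i < l → (G.Adj c (g i) ↔ i = 0))
    (ma mb : ℕ) (hma : ma < l) (hmb : mb < l) (hmale : ma ≤ mb)
    (hadja : G.Adj a (g ma)) (hamin : ∀ i, i < ma → ¬ G.Adj a (g i))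
    (hadjb : G.Adj b (g mb)) (hbmin : ∀ i, i < mb → ¬ G.Adj b (g i))
    (has : a ∉ s) (hbs : b ∉ s) (hcs : c ∉ s)
    (hab : a ≠ b) (hac : a ≠ c) (hbc : b ≠ c)
    (hnab : ¬ G.Adj a b) (hnac : ¬ G.Adj a c) (hnbc : ¬ G.Adj b c)
    (hI : (I : Set V) = {a, b, c}) : Concl G I s := by
  have hbgE : ∀ i, i < mb + 1 → (G.Adj b (g i) ↔ (0 = 0 ∧ i = (mb + 1) - 1)) := by
    intro i hi
    constructor
    · intro h
      refine ⟨rfl, ?_⟩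
      by_contra hne
      exact hbmin i (by omega) h
    · rintro ⟨-, he⟩
      rw [he]
      show G.Adj b (g mb)
      exact hadjb
  by_cases hctwo : ∃ i, i < mb + 1 ∧ i ≠ ma ∧ G.Adj a (g i)
  · obtain ⟨i2, hi2, hi2ne, hadj2⟩ := hctwo
    refine caseM2 G I s a b c g (mb + 1) (by omega) (fun _ => a) 0
      (fun i hi => hgs i (by omega)) (fun j hj => absurd hj (by omega))
      (fun i j hi hj => hgg i j (by omega) (by omega))
      (fun i j hi => absurd hi (by omega)) (fun i j hi hj => absurd hj (by omega))
      (fun i j hi hj => hginj i j (by omega) (by omega))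
      (fun i j hi => absurd hi (by omega)) (fun i j hi hj => absurd hj (by omega))
      (fun i hi => hcg i (by omega)) (fun j hj => absurd hj (by omega))
      hbgE (fun j hj => absurd hj (by omega))
      has hbs hcs hab hac hbc hnab hnac hnbc ?_ hI
    refine ⟨ma, i2, by omega, by omega, fun h => hi2ne h.symm, ?_, ?_⟩
    · rw [if_pos (show ma < mb + 1 by omega)]
      exact hadja
    · rw [if_pos (show i2 < mb + 1 by omega)]
      exact hadj2
  · have hagE : ∀ i, i < mb + 1 → (G.Adj a (g i) ↔ i = ma) := by
      intro i hi
      constructor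
      · intro h
        by_contra hne
        exact hctwo ⟨i, hi, hne, h⟩
      · rintro rfl; exact hadja
    have hIacb : (I : Set V) = {a, c, b} := by
      rw [hI]; ext v
      simp only [Set.mem_insert_iff, Set.mem_singleton_iff]
      tauto
    exact Or.inl (caseS2 G I s a b c g (mb + 1) (by omega) ma (by omega) (fun _ => a) 0
      (fun i hi => hgs i (by omega)) (fun j hj => absurd hj (by omega))
      (fun i j hi hj => hgg i j (by omega) (by omega))
      (fun i j hi => absurd hi (by omega)) (fun i j hi hj => absurd hj (by omega))
      (fun i j hi hj => hginj i j (by omega) (by omega))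
      (fun i j hi => absurd hi (by omega)) (fun i j hi hj => absurd hj (by omega))
      hagE (fun j hj => absurd hj (by omega))
      hbgE (fun j hj => absurd hj (by omega))
      (fun i hi => hcg i (by omega)) (fun j hj => absurd hj (by omega))
      has hbs hcs hab hac hbc hnab hnac hnbc hIacb)

lemma caseB4core {V : Type} (G : SimpleGraph V) (I : Finset V) (s : Set V) (a b c : V)
    (f : ℕ → V) (k : ℕ) (g : ℕ → V) (l : ℕ) (hk : 0 < k) (hl : 0 < l)
    (hfs : ∀ i, i < k → f i ∈ s)
    (hff : ∀ i j, i < k → j < k → (G.Adj (f i) (f j) ↔ (j = i + 1 ∨ i = j + 1)))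
    (hfinj : ∀ i j, i < k → j < k → f i = f j → i = j)
    (hfa : ∀ i, i < k → (G.Adj a (f i) ↔ i = 0))
    (hfb : ∀ i, i < k → (G.Adj b (f i) ↔ i = k - 1))
    (hgs : ∀ i, i < l → g i ∈ s)
    (hgg : ∀ i j, i < l → j < l → (G.Adj (g i) (g j) ↔ (j = i + 1 ∨ i = j + 1)))
    (hginj : ∀ i j, i < l → j < l → g i = g j → i = j)
    (hgf : ∀ i m, i < l → m < k → g i ≠ f m)
    (hcg : ∀ i, i < l → (G.Adj c (g i) ↔ i = 0))
    (hQ4 : ∀ i, i + 1 < l → ∀ m, m < k → ¬ G.Adj (g i) (f m))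
    (hcf : ∀ m, m < k → ¬ G.Adj c (f m))
    (jm : ℕ) (hjmk : jm < k) (hjmadj : G.Adj (g (l - 1)) (f jm))
    (hjmmax : ∀ m, m < k → G.Adj (g (l - 1)) (f m) → (m = jm ∨ m + 1 = jm))
    (hα : ∃ i, i < l ∧ G.Adj a (g i))
    (hβ : ∀ i, i < l → ¬ G.Adj b (g i))
    (has : a ∉ s) (hbs : b ∉ s) (hcs : c ∉ s)
    (hab : a ≠ b) (hac : a ≠ c) (hbc : b ≠ c)
    (hnab : ¬ G.Adj a b) (hnac : ¬ G.Adj a c) (hnbc : ¬ G.Adj b c)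
    (hI : (I : Set V) = {a, b, c}) : Concl G I s := by
  set r := k - jm with hrdef
  have hr : 0 < r := by omega
  have hhs : ∀ j, j < r → f (jm + j) ∈ s := fun j hj => hfs _ (by omega)
  have hhh : ∀ i j, i < r → j < r →
      (G.Adj (f (jm + i)) (f (jm + j)) ↔ (j = i + 1 ∨ i = j + 1)) := by
    intro i j hi hj
    rw [hff _ _ (by omega) (by omega)]
    omega
  have hgh : ∀ i j, i < l → j < r → (G.Adj (g i) (f (jm + j)) ↔ (i = l - 1 ∧ j = 0)) := by
    intro i j hi hj
    constructor
    · intro hadj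
      rcases Nat.lt_or_ge i (l - 1) with h | h
      · exact absurd hadj (hQ4 i (by omega) _ (by omega))
      · have hieq : i = l - 1 := by omega
        subst hieq
        have := hjmmax _ (by omega) hadj
        exact ⟨rfl, by omega⟩
    · rintro ⟨rfl, rfl⟩
      show G.Adj (g (l - 1)) (f (jm + 0))
      have e : jm + 0 = jm := by omega
      rw [e]
      exact hjmadj
  have hhinj : ∀ i j, i < r → j < r → f (jm + i) = f (jm + j) → i = j := by
    intro i j hi hj heq
    have := hfinj _ _ (by omega) (by omega) heq
    omega
  have hghne : ∀ i j, i < l → j < r → g i ≠ f (jm + j) :=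
    fun i j hi hj => hgf i _ hi (by omega)
  have hbh : ∀ j, j < r → (G.Adj b (f (jm + j)) ↔ j = r - 1) := by
    intro j hj
    rw [hfb _ (by omega)]
    omega
  have hch : ∀ j, j < r → ¬ G.Adj c (f (jm + j)) := fun j hj => hcf _ (by omega)
  have hbg : ∀ i, i < l → (G.Adj b (g i) ↔ (r = 0 ∧ i = l - 1)) :=
    fun i hi => iff_of_false (hβ i hi) (by omega)
  by_cases hcase : ∃ j1 j2, j1 < l + r ∧ j2 < l + r ∧ j1 ≠ j2 ∧
      G.Adj a (if j1 < l then g j1 else f (jm + (j1 - l))) ∧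
      G.Adj a (if j2 < l then g j2 else f (jm + (j2 - l)))
  · exact caseM2 G I s a b c g l hl (fun j => f (jm + j)) r hgs hhs hgg hhh hgh hginj
      hhinj hghne hcg hch hbg hbh has hbs hcs hab hac hbc hnab hnac hnbc hcase hI
  · obtain ⟨istar, histar, haistar⟩ := hα
    have hah : ∀ j, j < r → ¬ G.Adj a (f (jm + j)) := by
      intro j hj hadj
      refine hcase ⟨istar, l + j, by omega, by omega, by omega, ?_, ?_⟩
      · rw [if_pos histar]; exact haistar
      · rw [if_neg (by omega)]
        have e : l + j - l = j := by omega
        rw [e]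
        exact hadj
    have hag : ∀ i, i < l → (G.Adj a (g i) ↔ i = istar) := by
      intro i hi
      constructor
      · intro hadj
        by_contra hne
        refine hcase ⟨i, istar, by omega, by omega, hne, ?_, ?_⟩
        · rw [if_pos hi]; exact hadj
        · rw [if_pos histar]; exact haistar
      · rintro rfl; exact haistar
    have hIacb : (I : Set V) = {a, c, b} := by
      rw [hI]; ext v
      simp only [Set.mem_insert_iff, Set.mem_singleton_iff]
      tauto
    exact Or.inl (caseS2 G I s a b c g l hl istar histar (fun j => f (jm + j)) r
      hgs hhs hgg hhh hgh hginj hhinj hghne hag hah hbg hbh hcg hch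
      has hbs hcs hab hac hbc hnab hnac hnbc hIacb)

lemma caseB4outer {V : Type} (G : SimpleGraph V) (I : Finset V) (s : Set V) (a b c : V)
    (f : ℕ → V) (k : ℕ) (g : ℕ → V) (l : ℕ)
    (hf : Pcand G s a b f k)
    (hkmin : ∀ k' f', k' < k → ¬ Pcand G s a b f' k')
    (hB : ∀ f', Pcand G s a b f' k → ∀ m, m < k → ¬ G.Adj c (f' m))
    (hg : Qcand G s c f k g l)
    (hlmin : ∀ l' f' g', l' < l → ¬ (Pcand G s a b f' k ∧ Qcand G s c f' k g' l'))
    (hα : ∃ i, i < l ∧ G.Adj a (g i))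
    (hβ : ∀ i, i < l → ¬ G.Adj b (g i))
    (has : a ∉ s) (hbs : b ∉ s) (hcs : c ∉ s)
    (hab : a ≠ b) (hac : a ≠ c) (hbc : b ≠ c)
    (hnab : ¬ G.Adj a b) (hnac : ¬ G.Adj a c) (hnbc : ¬ G.Adj b c)
    (hI : (I : Set V) = {a, b, c}) : Concl G I s := by
  classical
  have hk : 0 < k := hf.1
  have hl : 0 < l := hg.1
  have hfs : ∀ i, i < k → f i ∈ s := hf.2.1
  have hgs : ∀ i, i < l → g i ∈ s := hg.2.1
  have hgf : ∀ i m, i < l → m < k → g i ≠ f m := hg.2.2.2.2.1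
  obtain ⟨hff, hfinj, hfa, hfb⟩ := P_iffs hf hkmin
  obtain ⟨hgg, hginj, hcg⟩ := Q_iffs hf hg hlmin
  have hQ4 := Q_L4 hf hg hlmin
  have hcf : ∀ m, m < k → ¬ G.Adj c (f m) := hB f hf
  have htex : ∃ m, m < k ∧ G.Adj (g (l - 1)) (f m) := hg.2.2.2.2.2
  set j0 := Nat.find htex with hj0def
  obtain ⟨hj0k, hj0adj⟩ := Nat.find_spec htex
  have htJ : ∀ m, m < k → G.Adj (g (l - 1)) (f m) → m = j0 ∨ m = j0 + 1 := by
    intro m hm hadj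
    have hge : j0 ≤ m := by
      by_contra hlt
      exact Nat.find_min htex (by omega) ⟨hm, hadj⟩
    rcases Nat.eq_or_lt_of_le hge with h | h
    · exact Or.inl h.symm
    · exact Or.inr (Q_L5 hf hg hlmin hkmin hB j0 m hm hj0adj hadj h)
  by_cases h2nd : j0 + 1 < k ∧ G.Adj (g (l - 1)) (f (j0 + 1))
  · refine caseB4core G I s a b c f k g l hk hl hfs hff hfinj hfa hfb hgs hgg hginj hgf
      hcg hQ4 hcf (j0 + 1) h2nd.1 h2nd.2 ?_ hα hβ has hbs hcs hab hac hbc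
      hnab hnac hnbc hI
    intro m hm hadj
    rcases htJ m hm hadj with h | h <;> omega
  · refine caseB4core G I s a b c f k g l hk hl hfs hff hfinj hfa hfb hgs hgg hginj hgf
      hcg hQ4 hcf j0 hj0k hj0adj ?_ hα hβ has hbs hcs hab hac hbc hnab hnac hnbc hI
    intro m hm hadj
    rcases htJ m hm hadj with h | h
    · exact Or.inl h
    · exfalso
      subst h
      exact h2nd ⟨hm, hadj⟩

/-- Lemma 1 of Dallard et al.: if `I` is an independent set of size `3` and `C = s` is a
connected component of `G − I` such that every vertex of `I` has a neighbor in `s`, then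
`G[N[C]]` contains an induced subgraph `H ∈ 𝓢 ∪ 𝓣 ∪ 𝓜` whose extremities are exactly `I`. -/
theorem stmt17 {V : Type} (G : SimpleGraph V) (I : Finset V) (hI : I.card = 3)
    (hind : ∀ a ∈ I, ∀ b ∈ I, a ≠ b → ¬ G.Adj a b)
    (s : Set V) (hdisj : ∀ v ∈ s, v ∉ I)
    (hconn : (G.induce s).Connected)
    (hclosed : ∀ v : V, v ∉ s → v ∉ I → ∀ w ∈ s, ¬ G.Adj v w)
    (hNbr : ∀ v ∈ I, ∃ w ∈ s, G.Adj v w) :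
    (∃ n : Fin 3 → ℕ, (∀ i, 1 ≤ n i) ∧
      ∃ e : spiderS n ↪g G,
        (∀ x, e x ∈ s ∪ {v : V | ∃ w ∈ s, G.Adj v w}) ∧
        (fun x => e x) '' {x | ∃ y : Σ i : Fin 3, Fin (n i),
            x = some y ∧ (y.2 : ℕ) + 1 = n y.1} = ↑I) ∨
    (∃ n : Fin 3 → ℕ, (∀ i, 1 ≤ n i) ∧
      ∃ e : spiderT n ↪g G,
        (∀ x, e x ∈ s ∪ {v : V | ∃ w ∈ s, G.Adj v w}) ∧
        (fun x => e x) '' {x : Σ i : Fin 3, Fin (n i + 1) | (x.2 : ℕ) = n x.1} = ↑I) ∨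
    (∃ (m : ℕ) (A : Finset (Fin m)), 2 ≤ A.card ∧
      (∀ j ∈ A, (j : ℕ) ≠ 0 ∧ (j : ℕ) + 1 ≠ m) ∧
      ∃ e : centerPath m A ↪g G,
        (∀ x, e x ∈ s ∪ {v : V | ∃ w ∈ s, G.Adj v w}) ∧
        (fun x => e x) '' {x : Option (Fin m) | x = none ∨
            ∃ j : Fin m, x = some j ∧ ((j : ℕ) = 0 ∨ (j : ℕ) + 1 = m)} = ↑I) := by
  classical
  obtain ⟨a, b, c, hab, hac, hbc, hIeq⟩ := Finset.card_eq_three.mp hI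
  subst hIeq
  have haI : a ∈ ({a, b, c} : Finset V) := by simp
  have hbI : b ∈ ({a, b, c} : Finset V) := by simp
  have hcI : c ∈ ({a, b, c} : Finset V) := by simp
  have hnab : ¬ G.Adj a b := hind a haI b hbI hab
  have hnac : ¬ G.Adj a c := hind a haI c hcI hac
  have hnbc : ¬ G.Adj b c := hind b hbI c hcI hbc
  have has : a ∉ s := fun h => hdisj a h haI
  have hbs : b ∉ s := fun h => hdisj b h hbI
  have hcs : c ∉ s := fun h => hdisj c h hcI
  have hIset : ((({a, b, c} : Finset V)) : Set V) = {a, b, c} := by simp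
  obtain ⟨wa, hwa, hawa⟩ := hNbr a haI
  obtain ⟨wb, hwb, hbwb⟩ := hNbr b hbI
  obtain ⟨wc, hwc, hcwc⟩ := hNbr c hcI
  suffices h : Concl G ({a, b, c} : Finset V) s by exact h
  have hPex : ∃ k, ∃ f, Pcand G s a b f k := by
    obtain ⟨r, v, hv0, hvr, hvs, hvadj⟩ := walk_fun G s hconn wa wb hwa hwb
    refine ⟨r + 1, v, by omega, fun i hi => hvs i (by omega),
      fun i hi => hvadj i (by omega), by rw [hv0]; exact hawa, ?_⟩
    show G.Adj b (v (r + 1 - 1))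
    have e : r + 1 - 1 = r := by omega
    rw [e, hvr]
    exact hbwb
  set k := Nat.find hPex with hkdef
  have hkspec : ∃ f, Pcand G s a b f k := Nat.find_spec hPex
  have hkmin : ∀ k' f', k' < k → ¬ Pcand G s a b f' k' := by
    intro k' f' hlt hc
    exact Nat.find_min hPex hlt ⟨f', hc⟩
  by_cases hA : ∃ f, Pcand G s a b f k ∧ ∃ m, m < k ∧ G.Adj c (f m)
  · obtain ⟨f, hf, m1, hm1, hcm1⟩ := hA
    exact caseAouter G _ s a b c f k hf hkmin m1 hm1 hcm1 has hbs hcs hab hac hbc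
      hnab hnac hnbc hIset
  · have hB : ∀ f', Pcand G s a b f' k → ∀ m, m < k → ¬ G.Adj c (f' m) := by
      intro f' hf' m hm hadj
      exact hA ⟨f', hf', m, hm, hadj⟩
    obtain ⟨f0, hf0⟩ := hkspec
    have hk0 : 0 < k := hf0.1
    have hQex : ∃ l, ∃ f g, Pcand G s a b f k ∧ Qcand G s c f k g l := by
      obtain ⟨r, v, hv0, hvr, hvs, hvadj⟩ := walk_fun G s hconn wc (f0 0) hwc
        (hf0.2.1 0 hk0)
      have hDex : ∃ i, i ≤ r ∧ ((∃ m, m < k ∧ v i = f0 m) ∨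
          (∃ m, m < k ∧ G.Adj (v i) (f0 m))) :=
        ⟨r, le_refl r, Or.inl ⟨0, hk0, hvr⟩⟩
      set i0 := Nat.find hDex with hi0def
      obtain ⟨hi0r, hD⟩ := Nat.find_spec hDex
      have hmin' : ∀ i, i < i0 → ¬((∃ m, m < k ∧ v i = f0 m) ∨
          (∃ m, m < k ∧ G.Adj (v i) (f0 m))) := by
        intro i hi hcon
        exact Nat.find_min hDex hi ⟨by omega, hcon⟩
      have hnotf : ¬ ∃ m, m < k ∧ v i0 = f0 m := by
        rintro ⟨m, hm, he⟩
        rcases Nat.eq_zero_or_pos i0 with h0 | hpos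
        · rw [h0, hv0] at he
          exact hB f0 hf0 m hm (he ▸ hcwc)
        · refine hmin' (i0 - 1) (by omega) (Or.inr ⟨m, hm, ?_⟩)
          have h3 := hvadj (i0 - 1) (by omega)
          have e : i0 - 1 + 1 = i0 := by omega
          rw [e, he] at h3
          exact h3
      have hadjf : ∃ m, m < k ∧ G.Adj (v i0) (f0 m) := by
        rcases hD with h | h
        · exact absurd h hnotf
        · exact h
      refine ⟨i0 + 1, f0, v, hf0, by omega, fun i hi => hvs i (by omega),
        fun i hi => hvadj i (by omega), by rw [hv0]; exact hcwc, ?_, ?_⟩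
      · intro i m hi hm heq
        rcases Nat.lt_or_ge i i0 with h | h
        · exact hmin' i h (Or.inl ⟨m, hm, heq⟩)
        · have hieq : i = i0 := by omega
          subst hieq
          exact hnotf ⟨m, hm, heq⟩
      · have e : i0 + 1 - 1 = i0 := by omega
        rw [e]
        exact hadjf
    set l := Nat.find hQex with hldef
    obtain ⟨f, g, hf, hg⟩ := Nat.find_spec hQex
    have hlmin : ∀ l' f' g', l' < l → ¬(Pcand G s a b f' k ∧ Qcand G s c f' k g' l') := by
      intro l' f' g' hlt hcon
      exact Nat.find_min hQex hlt ⟨f', g', hcon⟩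
    have hl : 0 < l := hg.1
    have hkpos : 0 < k := hf.1
    by_cases halpha : ∃ i, i < l ∧ G.Adj a (g i)
    · by_cases hbeta : ∃ i, i < l ∧ G.Adj b (g i)
      · -- case B3 : both a and b see the Q-path
        obtain ⟨hgg, hginj, hcg⟩ := Q_iffs hf hg hlmin
        set ma := Nat.find halpha with hmadef
        obtain ⟨hma, hadja⟩ := Nat.find_spec halpha
        have hamin : ∀ i, i < ma → ¬ G.Adj a (g i) := by
          intro i hi hadj
          exact Nat.find_min halpha hi ⟨by omega, hadj⟩
        set mb := Nat.find hbeta with hmbdef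
        obtain ⟨hmb, hadjb⟩ := Nat.find_spec hbeta
        have hbmin : ∀ i, i < mb → ¬ G.Adj b (g i) := by
          intro i hi hadj
          exact Nat.find_min hbeta hi ⟨by omega, hadj⟩
        rcases le_total ma mb with hle | hle
        · exact caseB3half G _ s a b c g l hl hg.2.1 hgg hginj hcg ma mb hma hmb hle
            hadja hamin hadjb hbmin has hbs hcs hab hac hbc hnab hnac hnbc hIset
        · have hI' : ((({a, b, c} : Finset V)) : Set V) = {b, a, c} := by
            rw [hIset]; ext v
            simp only [Set.mem_insert_iff, Set.mem_singleton_iff]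
            tauto
          exact caseB3half G _ s b a c g l hl hg.2.1 hgg hginj hcg mb ma hmb hma hle
            hadjb hbmin hadja hamin hbs has hcs (Ne.symm hab) hbc hac
            (fun h => hnab h.symm) hnbc hnac hI'
      · -- case B4 : only a sees the Q-path
        push_neg at hbeta
        exact caseB4outer G _ s a b c f k g l hf hkmin hB hg hlmin halpha hbeta
          has hbs hcs hab hac hbc hnab hnac hnbc hIset
    · by_cases hbeta : ∃ i, i < l ∧ G.Adj b (g i)
      · -- case B4 with roles of a and b swapped, f reversed
        push_neg at halpha
        have hf' : Pcand G s b a (fun i => f (k - 1 - i)) k := Pcand_rev hf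
        have hkmin' : ∀ k' f'', k' < k → ¬ Pcand G s b a f'' k' := by
          intro k' f'' hlt hcon
          exact hkmin k' _ hlt (Pcand_rev hcon)
        have hB' : ∀ f'', Pcand G s b a f'' k → ∀ m, m < k → ¬ G.Adj c (f'' m) := by
          intro f'' hcon m hm hadj
          refine hB _ (Pcand_rev hcon) (k - 1 - m) (by omega) ?_
          show G.Adj c (f'' (k - 1 - (k - 1 - m)))
          have e : k - 1 - (k - 1 - m) = m := by omega
          rw [e]
          exact hadj
        have hg' : Qcand G s c (fun i => f (k - 1 - i)) k g l := Qcand_rev hkpos hg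
        have hlmin' : ∀ l' f'' g', l' < l →
            ¬(Pcand G s b a f'' k ∧ Qcand G s c f'' k g' l') := by
          rintro l' f'' g' hlt ⟨hp, hq⟩
          exact hlmin l' _ g' hlt ⟨Pcand_rev hp, Qcand_rev hp.1 hq⟩
        have hI' : ((({a, b, c} : Finset V)) : Set V) = {b, a, c} := by
          rw [hIset]; ext v
          simp only [Set.mem_insert_iff, Set.mem_singleton_iff]
          tauto
        exact caseB4outer G _ s b a c (fun i => f (k - 1 - i)) k g l hf' hkmin' hB'
          hg' hlmin' hbeta halpha hbs has hcs (Ne.symm hab) hbc hac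
          (fun h => hnab h.symm) hnbc hnac hI'
      · -- case B1/B2 : neither a nor b sees the Q-path
        push_neg at halpha
        push_neg at hbeta
        exact caseB12outer G _ s a b c f k g l hf hkmin hB hg hlmin halpha hbeta
          has hbs hcs hab hac hbc hnab hnac hnbc hIset
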